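/- arXiv:1911.00241 — 6 statements merged into one kernel-verified Lean document; each statement's English description precedes it below -/
import Mathlib

section
/- There is no linear isometry from the complex space ℓ₁² into the compact operators S_∞ on ℓ₂; that is, there do not exist compact operators T, S on ℓ₂ with ‖z₁T + z₂S‖ = |z₁| + |z₂| for all z₁, z₂ ∈ ℂ. -/
noncomputable section

/-- `ℓ₂`, the complex Hilbert sequence space. -/
abbrev H : Type := lp (fun _ : ℕ => ℂ) 2

set_option synthInstance.maxHeartbeats 1000000
set_option maxHeartbeats 1000000

open ContinuousLinearMap Metric Complex

local notation "⟪" x ", " y "⟫" => @inner ℂ H _ x y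

/-- If a norm-`≤ 1` operator nearly attains its norm at a unit vector `x`,
then `B†Bx` is close to `x`. -/
lemma near_id (B : H →L[ℂ] H) (hB : ‖B‖ ≤ 1) (x : H) (hx : ‖x‖ = 1) {δ : ℝ} (hδ : 0 ≤ δ)
    (h : 1 - δ ≤ ‖B x‖) : ‖(ContinuousLinearMap.adjoint B) (B x) - x‖ ≤ 2 * Real.sqrt δ := by
  set u := (ContinuousLinearMap.adjoint B) (B x) with hu
  have hBx : ‖B x‖ ≤ 1 := by
    calc ‖B x‖ ≤ ‖B‖ * ‖x‖ := B.le_opNorm x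
    _ ≤ 1 := by rw [hx]; simpa using hB
  have hun : ‖u‖ ≤ 1 := by
    calc ‖u‖ ≤ ‖ContinuousLinearMap.adjoint B‖ * ‖B x‖ := le_opNorm _ _
    _ ≤ 1 := by
        rw [LinearIsometryEquiv.norm_map ContinuousLinearMap.adjoint B]
        exact mul_le_one₀ hB (norm_nonneg _) hBx
  have hre : RCLike.re ⟪u, x⟫ = ‖B x‖ ^ 2 := by
    rw [hu, ContinuousLinearMap.adjoint_inner_left]
    rw [@inner_self_eq_norm_sq ℂ]
  have hsq : ‖u - x‖ ^ 2 ≤ 4 * δ := by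
    have h2 := @norm_sub_sq ℂ H _ _ _ u x
    rw [hre, hx] at h2
    have hp : (1 - ‖B x‖) * (1 + ‖B x‖) ≤ δ * 2 :=
      mul_le_mul (by linarith) (by linarith) (by positivity) hδ
    nlinarith [norm_nonneg u, hun, norm_nonneg (B x)]
  have h4 : (2 * Real.sqrt δ) ^ 2 = 4 * δ := by
    rw [mul_pow, Real.sq_sqrt hδ]; ring
  refine le_of_pow_le_pow_left₀ two_ne_zero (by positivity) ?_
  rw [h4]; exact hsq

/-- A rational parametrization of the unit circle. -/
def circ (a : ℝ) : ℂ := (a + I) / (a - I)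

lemma circ_den_ne (a : ℝ) : (a : ℂ) - I ≠ 0 := by
  intro h
  have := congrArg Complex.im h
  simp at this

lemma circ_abs (a : ℝ) : ‖circ a‖ = 1 := by
  unfold circ
  rw [norm_div]
  have h1 : ‖(a : ℂ) + I‖ = Real.sqrt (a ^ 2 + 1) := by
    simpa using Complex.norm_add_mul_I a 1
  have h2 : ‖(a : ℂ) - I‖ = Real.sqrt (a ^ 2 + 1) := by
    have : (a : ℂ) - I = a + (-1 : ℝ) * I := by push_cast; ring
    rw [this, Complex.norm_add_mul_I]; norm_num
  rw [h1, h2, div_self]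
  positivity

lemma circ_lower {a b : ℝ} (ha : 0 ≤ a) (hb : 0 ≤ b) (hab : 1 ≤ |a - b|) :
    2 / ((a + 1) * (b + 1)) ≤ ‖circ a - circ b‖ := by
  have hda := circ_den_ne a
  have hdb := circ_den_ne b
  have he : circ a - circ b = 2 * I * ((b : ℂ) - a) / (((a : ℂ) - I) * ((b : ℂ) - I)) := by
    unfold circ
    field_simp
    ring
  have habs : ‖circ a - circ b‖
      = 2 * |b - a| / (‖(a : ℂ) - I‖ * ‖(b : ℂ) - I‖) := by
    rw [he, norm_div]
    have h2 : ((b : ℂ) - a) = ((b - a : ℝ) : ℂ) := by push_cast; ring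
    rw [h2, norm_mul, norm_mul, Complex.norm_two, Complex.norm_I, Complex.norm_real,
      Real.norm_eq_abs, norm_mul, mul_one]
  have hsqa : ‖((a : ℝ) : ℂ) - I‖ ≤ a + 1 := by
    have h1 : ((a : ℂ) - I) = (a : ℝ) + (-1 : ℝ) * I := by push_cast; ring
    rw [h1, Complex.norm_add_mul_I]
    have : Real.sqrt (a ^ 2 + (-1) ^ 2) ≤ Real.sqrt ((a + 1) ^ 2) :=
      Real.sqrt_le_sqrt (by nlinarith)
    rwa [Real.sqrt_sq (by linarith)] at this
  have hsqb : ‖((b : ℝ) : ℂ) - I‖ ≤ b + 1 := by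
    have h1 : ((b : ℂ) - I) = (b : ℝ) + (-1 : ℝ) * I := by push_cast; ring
    rw [h1, Complex.norm_add_mul_I]
    have : Real.sqrt (b ^ 2 + (-1) ^ 2) ≤ Real.sqrt ((b + 1) ^ 2) :=
      Real.sqrt_le_sqrt (by nlinarith)
    rwa [Real.sqrt_sq (by linarith)] at this
  rw [habs]
  have hpa : 0 < ‖(a : ℂ) - I‖ := norm_pos_iff.mpr hda
  have hpb : 0 < ‖(b : ℂ) - I‖ := norm_pos_iff.mpr hdb
  have hba : 1 ≤ |b - a| := by rwa [abs_sub_comm]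
  calc 2 / ((a + 1) * (b + 1))
      ≤ 2 / (‖(a : ℂ) - I‖ * ‖(b : ℂ) - I‖) := by
        apply div_le_div_of_nonneg_left (by norm_num) (mul_pos hpa hpb)
        exact mul_le_mul hsqa hsqb hpb.le (by linarith)
  _ ≤ 2 * |b - a| / (‖(a : ℂ) - I‖ * ‖(b : ℂ) - I‖) := by
        apply div_le_div_of_nonneg_right ?_ (by positivity)
        nlinarith

lemma one_le_abs_natcast {j k : ℕ} (h : j ≠ k) : 1 ≤ |(j : ℝ) - k| := by
  have h1 : (1 : ℤ) ≤ |(j : ℤ) - k| := Int.one_le_abs (by omega)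
  have h2 : ((|(j : ℤ) - k| : ℤ) : ℝ) = |(j : ℝ) - k| := by
    rw [Int.cast_abs]
    push_cast
    ring_nf
  calc (1 : ℝ) ≤ ((|(j : ℤ) - k| : ℤ) : ℝ) := by exact_mod_cast h1
  _ = _ := h2

/-- There is no linear isometry from the complex `ℓ₁²` into the compact operators on `ℓ₂`:
there are no compact `T, S` with `‖z₁T + z₂S‖ = |z₁| + |z₂|` for all `z₁, z₂ ∈ ℂ`. -/
theorem stmt_5 :
    ¬ ∃ T S : H →L[ℂ] H, IsCompactOperator T ∧ IsCompactOperator S ∧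
      ∀ z₁ z₂ : ℂ, ‖z₁ • T + z₂ • S‖ = ‖z₁‖ + ‖z₂‖ := by
  rintro ⟨T, S, hT, hS, h⟩
  classical
  have hT1 : ‖T‖ = 1 := by simpa using h 1 0
  have hS1 : ‖S‖ = 1 := by simpa using h 0 1
  set A : H →L[ℂ] H := (ContinuousLinearMap.adjoint S).comp T with hA
  have hAc : IsCompactOperator (A : H → H) := by
    rw [hA]
    exact hT.clm_comp (ContinuousLinearMap.adjoint S)
  have hAnorm : ‖A‖ ≤ 1 := by
    rw [hA]
    calc ‖(ContinuousLinearMap.adjoint S).comp T‖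
        ≤ ‖ContinuousLinearMap.adjoint S‖ * ‖T‖ := opNorm_comp_le _ _
    _ = 1 := by
        rw [LinearIsometryEquiv.norm_map ContinuousLinearMap.adjoint S, hS1, hT1, mul_one]
  -- Step 1: approximate eigenvectors for every unimodular eigenvalue
  have key : ∀ lam : ℂ, ‖lam‖ = 1 → ∀ ε : ℝ, 0 < ε →
      ∃ x : H, ‖x‖ = 1 ∧ ‖A x - lam • x‖ ≤ ε := by
    intro lam hlam ε hε
    set δ : ℝ := min 1 ((ε / 4) ^ 2) with hδdef
    have hδ0 : 0 < δ := lt_min one_pos (by positivity)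
    have hδ1 : δ ≤ 1 := min_le_left _ _
    have hnorm2 : ‖T + lam • S‖ = 2 := by
      have := h 1 lam
      rw [one_smul] at this
      rw [this, hlam, norm_one]; norm_num
    obtain ⟨x₀, hx₀1, hx₀2⟩ := (T + lam • S).exists_lt_apply_of_lt_opNorm
      (r := 2 - δ) (by rw [hnorm2]; linarith)
    have hx₀ne : x₀ ≠ 0 := by
      intro h0
      rw [h0] at hx₀2
      simp at hx₀2
      linarith
    set x : H := ‖x₀‖⁻¹ • x₀ with hxdef
    have hxn : ‖x‖ = 1 := norm_smul_inv_norm hx₀ne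
    have hbig : 2 - δ < ‖T x + lam • S x‖ := by
      have hx₀pos : 0 < ‖x₀‖ := norm_pos_iff.2 hx₀ne
      have e1 : T x + lam • S x = (T + lam • S) x := by
        simp [ContinuousLinearMap.add_apply, ContinuousLinearMap.smul_apply]
      have happ : T x + lam • S x = ‖x₀‖⁻¹ • ((T + lam • S) x₀) := by
        rw [e1, hxdef, ContinuousLinearMap.map_smul_of_tower]
      rw [happ, norm_smul]
      have h1 : (1 : ℝ) ≤ ‖(‖x₀‖⁻¹ : ℝ)‖ := by
        rw [Real.norm_eq_abs, abs_of_pos (by positivity)]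
        rw [le_inv_comm₀ one_pos hx₀pos]
        simpa using hx₀1.le
      calc 2 - δ < ‖(T + lam • S) x₀‖ := hx₀2
      _ = 1 * ‖(T + lam • S) x₀‖ := (one_mul _).symm
      _ ≤ ‖(‖x₀‖⁻¹ : ℝ)‖ * ‖(T + lam • S) x₀‖ :=
          mul_le_mul_of_nonneg_right h1 (norm_nonneg _)
    have hlamn : ‖lam‖ = 1 := by rw [hlam]
    have hTx : ‖T x‖ ≤ 1 := by
      calc ‖T x‖ ≤ ‖T‖ * ‖x‖ := T.le_opNorm x
      _ = 1 := by rw [hT1, hxn, one_mul]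
    have hSx : ‖S x‖ ≤ 1 := by
      calc ‖S x‖ ≤ ‖S‖ * ‖x‖ := S.le_opNorm x
      _ = 1 := by rw [hS1, hxn, one_mul]
    have hlSx : ‖lam • S x‖ = ‖S x‖ := by rw [norm_smul, hlamn, one_mul]
    have hSxl : 1 - δ ≤ ‖S x‖ := by
      have := norm_add_le (T x) (lam • S x)
      rw [hlSx] at this
      linarith
    have hsub : ‖T x - lam • S x‖ ≤ 2 * Real.sqrt δ := by
      have hp := parallelogram_law_with_norm ℂ (T x) (lam • S x)
      have hsq : ‖T x - lam • S x‖ ^ 2 ≤ 4 * δ := by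
        rw [hlSx] at hp
        have hq : (2 - δ) * (2 - δ) ≤ ‖T x + lam • S x‖ * ‖T x + lam • S x‖ :=
          mul_self_le_mul_self (by linarith) hbig.le
        have hq2 : ‖T x‖ * ‖T x‖ ≤ 1 := mul_le_one₀ hTx (norm_nonneg _) hTx
        have hq3 : ‖S x‖ * ‖S x‖ ≤ 1 := mul_le_one₀ hSx (norm_nonneg _) hSx
        rw [pow_two]
        nlinarith [hδ0.le]
      have h4 : (2 * Real.sqrt δ) ^ 2 = 4 * δ := by
        rw [mul_pow, Real.sq_sqrt hδ0.le]; ring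
      refine le_of_pow_le_pow_left₀ two_ne_zero (by positivity) ?_
      rw [h4]; exact hsq
    have hSS : ‖(ContinuousLinearMap.adjoint S) (S x) - x‖ ≤ 2 * Real.sqrt δ :=
      near_id S hS1.le x hxn hδ0.le hSxl
    refine ⟨x, hxn, ?_⟩
    have hdecomp : A x - lam • x =
        (ContinuousLinearMap.adjoint S) (T x - lam • S x)
          + lam • ((ContinuousLinearMap.adjoint S) (S x) - x) := by
      rw [hA]
      simp only [ContinuousLinearMap.comp_apply, map_sub, map_smul, smul_sub]
      abel
    have hadjn : ∀ v : H, ‖(ContinuousLinearMap.adjoint S) v‖ ≤ ‖v‖ := by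
      intro v
      calc ‖(ContinuousLinearMap.adjoint S) v‖ ≤ ‖ContinuousLinearMap.adjoint S‖ * ‖v‖ :=
        le_opNorm _ _
      _ = ‖v‖ := by
        rw [LinearIsometryEquiv.norm_map ContinuousLinearMap.adjoint S, hS1, one_mul]
    have hfinal : ‖A x - lam • x‖ ≤ 4 * Real.sqrt δ := by
      rw [hdecomp]
      calc ‖_ + _‖ ≤ ‖(ContinuousLinearMap.adjoint S) (T x - lam • S x)‖
          + ‖lam • ((ContinuousLinearMap.adjoint S) (S x) - x)‖ := norm_add_le _ _
      _ ≤ 2 * Real.sqrt δ + 2 * Real.sqrt δ := by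
          refine add_le_add (le_trans (hadjn _) hsub) ?_
          rw [norm_smul, hlamn, one_mul]
          exact hSS
      _ = 4 * Real.sqrt δ := by ring
    refine hfinal.trans ?_
    have hs : Real.sqrt δ ≤ ε / 4 := by
      have h5 := Real.sqrt_le_sqrt (min_le_right 1 ((ε / 4) ^ 2))
      rwa [Real.sqrt_sq (by positivity)] at h5
    linarith
  -- Step 2: approximate eigenvectors for separated eigenvalues have separated images
  have sep : ∀ lam mu : ℂ, ‖lam‖ = 1 → ‖mu‖ = 1 → ∀ x y : H, ‖x‖ = 1 →
      ‖y‖ = 1 → ∀ ε : ℝ, 0 < ε → ε ≤ (‖lam - mu‖ / 32) ^ 2 →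
      ‖A x - lam • x‖ ≤ ε → ‖A y - mu • y‖ ≤ ε → 1 < ‖A x - A y‖ := by
    intro lam mu hlam hmu x y hx hy ε hε hεs hax hay
    set s : ℝ := ‖lam - mu‖ with hsdef
    have hs0 : 0 < s := by
      rcases eq_or_lt_of_le (norm_nonneg (lam - mu)) with h0 | h0
      · exfalso; rw [← hsdef] at h0; rw [← h0] at hεs; simp at hεs; linarith
      · exact h0
    have hlamn : ‖lam‖ = 1 := by rw [hlam]
    have hmun : ‖mu‖ = 1 := by rw [hmu]
    have hs2 : s ≤ 2 := by
      have := norm_sub_le lam mu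
      rw [hlamn, hmun] at this
      rw [hsdef]
      linarith
    have hsqrt : Real.sqrt ε ≤ s / 32 := by
      have := Real.sqrt_le_sqrt hεs
      rwa [Real.sqrt_sq (by positivity)] at this
    have hε116 : ε ≤ 1 / 16 := by
      calc ε ≤ (s / 32) ^ 2 := hεs
      _ ≤ (2 / 32) ^ 2 := by
          refine pow_le_pow_left₀ (by positivity) ?_ 2
          linarith
      _ ≤ 1 / 16 := by norm_num
    have hεsqrt : ε ≤ Real.sqrt ε := by
      nlinarith [Real.sq_sqrt hε.le, Real.sqrt_nonneg ε, hsqrt, hs2]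
    have hAx1 : ‖A x‖ ≤ 1 := by
      calc ‖A x‖ ≤ ‖A‖ * ‖x‖ := le_opNorm _ _
      _ ≤ 1 := by rw [hx, mul_one]; exact hAnorm
    have hAy1 : ‖A y‖ ≤ 1 := by
      calc ‖A y‖ ≤ ‖A‖ * ‖y‖ := le_opNorm _ _
      _ ≤ 1 := by rw [hy, mul_one]; exact hAnorm
    have hlx : ‖lam • x‖ = 1 := by rw [norm_smul, hlamn, hx, mul_one]
    have hmy : ‖mu • y‖ = 1 := by rw [norm_smul, hmun, hy, mul_one]
    have hAxl : 1 - ε ≤ ‖A x‖ := by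
      have h1 := norm_sub_norm_le (lam • x) (A x)
      rw [hlx, norm_sub_rev] at h1
      linarith
    have hadj : ‖(ContinuousLinearMap.adjoint A) (A x) - x‖ ≤ 2 * Real.sqrt ε :=
      near_id A hAnorm x hx hε.le hAxl
    have hinner1 : ‖⟪A x, A y⟫ - ⟪x, y⟫‖ ≤ 2 * Real.sqrt ε := by
      have he : ⟪A x, A y⟫ = ⟪(ContinuousLinearMap.adjoint A) (A x), y⟫ :=
        (ContinuousLinearMap.adjoint_inner_left A y (A x)).symm
      rw [he, ← inner_sub_left]
      calc ‖⟪(ContinuousLinearMap.adjoint A) (A x) - x, y⟫‖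
          ≤ ‖(ContinuousLinearMap.adjoint A) (A x) - x‖ * ‖y‖ := norm_inner_le_norm _ _
      _ ≤ 2 * Real.sqrt ε := by rw [hy, mul_one]; exact hadj
    have hinner2 : ‖⟪A x, A y⟫ - ⟪lam • x, mu • y⟫‖ ≤ 2 * ε := by
      have hid : ⟪A x, A y⟫ - ⟪lam • x, mu • y⟫
          = ⟪A x - lam • x, A y⟫ + ⟪lam • x, A y - mu • y⟫ := by
        rw [inner_sub_left, inner_sub_right]; ring
      rw [hid]
      calc ‖⟪A x - lam • x, A y⟫ + ⟪lam • x, A y - mu • y⟫‖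
          ≤ ‖⟪A x - lam • x, A y⟫‖ + ‖⟪lam • x, A y - mu • y⟫‖ := norm_add_le _ _
      _ ≤ ‖A x - lam • x‖ * ‖A y‖ + ‖lam • x‖ * ‖A y - mu • y‖ :=
          add_le_add (norm_inner_le_norm _ _) (norm_inner_le_norm _ _)
      _ ≤ ε * 1 + 1 * ε := by
          refine add_le_add (mul_le_mul hax hAy1 (norm_nonneg _) hε.le) ?_
          rw [hlx]; simpa using hay
      _ = 2 * ε := by ring
    have hsmul : ⟪lam • x, mu • y⟫ = (starRingEnd ℂ) lam * mu * ⟪x, y⟫ := by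
      rw [inner_smul_left, inner_smul_right]; ring
    have hfactor : ‖(starRingEnd ℂ) lam * mu - 1‖ = s := by
      have h1 : (starRingEnd ℂ) lam * mu - 1 = (starRingEnd ℂ) lam * (mu - lam) := by
        have h2 : (starRingEnd ℂ) lam * lam = 1 := by
          rw [← Complex.normSq_eq_conj_mul_self]
          rw [← Complex.sq_norm, hlam]
          norm_num
        rw [mul_sub, h2]
      rw [h1, norm_mul, RCLike.norm_conj, hlamn, one_mul, norm_sub_rev,
        hsdef]
    have hkey : s * ‖⟪x, y⟫‖ ≤ 2 * Real.sqrt ε + 2 * ε := by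
      have hid2 : ((starRingEnd ℂ) lam * mu - 1) * ⟪x, y⟫
          = (⟪lam • x, mu • y⟫ - ⟪A x, A y⟫) + (⟪A x, A y⟫ - ⟪x, y⟫) := by
        rw [hsmul]; ring
      have h3 : ‖((starRingEnd ℂ) lam * mu - 1) * ⟪x, y⟫‖ ≤ 2 * ε + 2 * Real.sqrt ε := by
        rw [hid2]
        calc ‖_ + _‖ ≤ ‖⟪lam • x, mu • y⟫ - ⟪A x, A y⟫‖ + ‖⟪A x, A y⟫ - ⟪x, y⟫‖ :=
          norm_add_le _ _
        _ ≤ 2 * ε + 2 * Real.sqrt ε := by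
            rw [norm_sub_rev]
            exact add_le_add hinner2 hinner1
      rw [norm_mul, hfactor] at h3
      linarith
    have hxy : ‖⟪x, y⟫‖ ≤ 1 / 8 := by
      have h4 : s * ‖⟪x, y⟫‖ ≤ s * (1 / 8) := by
        calc s * ‖⟪x, y⟫‖ ≤ 2 * Real.sqrt ε + 2 * ε := hkey
        _ ≤ 4 * Real.sqrt ε := by linarith
        _ ≤ 4 * (s / 32) := by linarith
        _ = s * (1 / 8) := by ring
      exact le_of_mul_le_mul_left h4 hs0
    have hLB : (1.3 : ℝ) ≤ ‖lam • x - mu • y‖ := by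
      have h5 := @norm_sub_sq ℂ H _ _ _ (lam • x) (mu • y)
      rw [hlx, hmy] at h5
      have h6 : RCLike.re ⟪lam • x, mu • y⟫ ≤ 1 / 8 := by
        calc RCLike.re ⟪lam • x, mu • y⟫ ≤ ‖⟪lam • x, mu • y⟫‖ := RCLike.re_le_norm _
        _ = ‖⟪x, y⟫‖ := by
            rw [hsmul, norm_mul, norm_mul, RCLike.norm_conj, hlamn, hmun, one_mul, one_mul]
        _ ≤ 1 / 8 := hxy
      nlinarith [norm_nonneg (lam • x - mu • y)]
    have hdec : lam • x - mu • y = (A x - A y) - (A x - lam • x) + (A y - mu • y) := by abel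
    have h7 : ‖lam • x - mu • y‖ ≤ ‖A x - A y‖ + ε + ε := by
      rw [hdec]
      calc ‖_ + _‖ ≤ ‖(A x - A y) - (A x - lam • x)‖ + ‖A y - mu • y‖ := norm_add_le _ _
      _ ≤ (‖A x - A y‖ + ‖A x - lam • x‖) + ‖A y - mu • y‖ :=
          add_le_add_left (norm_sub_le _ _) _
      _ ≤ ‖A x - A y‖ + ε + ε := by linarith
    linarith
  -- Step 3: pigeonhole against total boundedness of the image of the unit ball
  obtain ⟨K, hK, hKsub⟩ :=
    IsCompactOperator.image_closedBall_subset_compact (f := (A : H →ₗ[ℂ] H)) hAc 1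
  have hTB : TotallyBounded ((A : H → H) '' Metric.closedBall 0 1) :=
    (hK.totallyBounded).subset hKsub
  rw [totallyBounded_iff] at hTB
  obtain ⟨t, htfin, hcover⟩ := hTB (1 / 2) (by norm_num)
  set n : ℕ := htfin.toFinset.card + 2 with hndef
  have hn0 : 0 < n := by omega
  set s : ℝ := 2 / (((n : ℝ) + 1) * ((n : ℝ) + 1)) with hsdef
  have hs0 : 0 < s := by positivity
  have hsle : ∀ j k : Fin n, j ≠ k → s ≤ ‖circ (j : ℕ) - circ (k : ℕ)‖ := by
    intro j k hjk
    have hjkn : (j : ℕ) ≠ (k : ℕ) := fun h => hjk (Fin.ext h)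
    refine le_trans ?_ (circ_lower (Nat.cast_nonneg _) (Nat.cast_nonneg _)
      (one_le_abs_natcast hjkn))
    rw [hsdef]
    apply div_le_div_of_nonneg_left (by norm_num) (by positivity)
    have hj : ((j : ℕ) : ℝ) + 1 ≤ (n : ℝ) + 1 := by
      have h2 : ((j : ℕ) : ℝ) ≤ (n : ℝ) := by exact_mod_cast j.2.le
      linarith
    have hk : ((k : ℕ) : ℝ) + 1 ≤ (n : ℝ) + 1 := by
      have h2 : ((k : ℕ) : ℝ) ≤ (n : ℝ) := by exact_mod_cast k.2.le
      linarith
    exact mul_le_mul hj hk (by positivity) (by positivity)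
  set ε : ℝ := (s / 32) ^ 2 with hεdef
  have hε : 0 < ε := by positivity
  choose x hx1 hx2 using fun k : Fin n => key (circ (k : ℕ)) (circ_abs _) ε hε
  have hsep : ∀ j k : Fin n, j ≠ k → 1 < ‖A (x j) - A (x k)‖ := by
    intro j k hjk
    refine sep _ _ (circ_abs _) (circ_abs _) _ _ (hx1 j) (hx1 k) ε hε ?_ (hx2 j) (hx2 k)
    rw [hεdef]
    refine pow_le_pow_left₀ (by positivity) ?_ 2
    exact div_le_div_of_nonneg_right (hsle j k hjk) (by norm_num)
  have hmem : ∀ k : Fin n, A (x k) ∈ ⋃ y ∈ t, Metric.ball y (1 / 2) := by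
    intro k
    refine hcover (Set.mem_image_of_mem _ ?_)
    rw [Metric.mem_closedBall, dist_zero_right, hx1 k]
  have hsel : ∀ k : Fin n, ∃ c ∈ t, A (x k) ∈ Metric.ball c (1 / 2) := by
    intro k
    simpa using Set.mem_iUnion₂.1 (hmem k)
  choose c hc1 hc2 using hsel
  have hcard : Fintype.card { y // y ∈ htfin.toFinset } < Fintype.card (Fin n) := by
    rw [Fintype.card_coe, Fintype.card_fin]
    omega
  obtain ⟨j, k, hjk, hgeq⟩ := Fintype.exists_ne_map_eq_of_card_lt
    (fun k : Fin n => (⟨c k, htfin.mem_toFinset.2 (hc1 k)⟩ : { y // y ∈ htfin.toFinset })) hcard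
  have hceq : c j = c k := congrArg Subtype.val hgeq
  have hdist : dist (A (x j)) (A (x k)) < 1 := by
    calc dist (A (x j)) (A (x k)) ≤ dist (A (x j)) (c j) + dist (c j) (A (x k)) :=
      dist_triangle _ _ _
    _ < 1 / 2 + 1 / 2 := by
        refine add_lt_add (hc2 j) ?_
        rw [hceq, dist_comm]
        exact hc2 k
    _ = 1 := by norm_num
  have hgt := hsep j k hjk
  rw [← dist_eq_norm] at hgt
  linarith
end
end

section
/- For m ≥ 2, there is no linear isometry from the complex space ℓ₁^m into the compact operators S_∞ on ℓ₂. -/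
set_option maxHeartbeats 1000000

noncomputable section

def uvec (k : ℕ) (a c : ℂ) : PiLp 1 (fun _ : Fin (k + 2) => ℂ) :=
  WithLp.toLp 1 (fun i => if i = 0 then a else if i = 1 then c else 0)

lemma uvec_decomp (k : ℕ) (a c : ℂ) :
    uvec k a c = a • uvec k 1 0 + c • uvec k 0 1 := by
  ext i
  rw [PiLp.add_apply, PiLp.smul_apply, PiLp.smul_apply]
  simp only [uvec]
  split_ifs <;> simp

lemma uvec_norm (k : ℕ) (a c : ℂ) : ‖uvec k a c‖ = ‖a‖ + ‖c‖ := by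
  have h01 : (0 : Fin (k + 2)) ≠ 1 := Fin.ne_of_val_ne (by simp)
  have hterm : ∀ i : Fin (k + 2), ‖uvec k a c i‖
      = (if i = 0 then ‖a‖ else 0) + (if i = 1 then ‖c‖ else 0) := by
    intro i
    simp only [uvec]
    rcases eq_or_ne i 0 with rfl | h0
    · simp [h01.symm]
    · rcases eq_or_ne i 1 with rfl | h1
      · simp [h0, h01.symm]
      · simp [h0, h1]
  rw [PiLp.norm_eq_sum (by norm_num)]
  simp only [ENNReal.toReal_one, Real.rpow_one, one_div_one]
  rw [Finset.sum_congr rfl (fun i _ => hterm i), Finset.sum_add_distrib,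
    Finset.sum_ite_eq' Finset.univ (0 : Fin (k+2)) (fun _ => ‖a‖),
    Finset.sum_ite_eq' Finset.univ (1 : Fin (k+2)) (fun _ => ‖c‖)]
  simp

lemma omega_ne (n : ℕ) : ((n : ℂ) + Complex.I) ≠ 0 := by
  intro h
  have := congrArg Complex.im h
  simp at this

def om (n : ℕ) : ℂ := ((n : ℂ) - Complex.I) / ((n : ℂ) + Complex.I)

lemma om_norm (n : ℕ) : ‖om n‖ = 1 := by
  rw [om, norm_div]
  rw [show (n : ℂ) - Complex.I = (starRingEnd ℂ) ((n : ℂ) + Complex.I) by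
    simp [map_add, Complex.conj_I, sub_eq_add_neg]]
  rw [RCLike.norm_conj]
  exact div_self (by simpa using (omega_ne n))

lemma om_inj : Function.Injective om := by
  intro a b hab
  rw [om, om, div_eq_div_iff (omega_ne a) (omega_ne b)] at hab
  have h2 : (2 : ℂ) * Complex.I * a = 2 * Complex.I * b := by ring_nf at hab ⊢; linear_combination hab
  have h3 : (a : ℂ) = b := by
    field_simp at h2
    exact_mod_cast h2
  exact_mod_cast h3

open ContinuousLinearMap Filter Topology Metric in
lemma attains_norm (T : H →L[ℂ] H) (hT : IsCompactOperator T) (hn : ‖T‖ ≠ 0) :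
    ∃ x : H, ‖x‖ ≤ 1 ∧ ‖T x‖ = ‖T‖ := by
  set c := ‖T‖ with hc
  have hc0 : 0 < c := lt_of_le_of_ne (norm_nonneg T) (Ne.symm hn)
  have hex : ∀ n : ℕ, ∃ x : H, ‖x‖ ≤ 1 ∧ c - 1 / (n + 1) < ‖T x‖ := by
    intro n
    obtain ⟨x, hx1, hx2⟩ := T.exists_lt_apply_of_lt_opNorm
      (r := c - 1 / (n + 1)) (by
        have h1 : (0:ℝ) < 1 / (n + 1) := by positivity
        rw [← hc]; linarith)
    exact ⟨x, hx1.le, hx2⟩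
  choose x hx1 hx2 using hex
  have hTx_le : ∀ n, ‖T (x n)‖ ≤ c := fun n => by
    calc ‖T (x n)‖ ≤ ‖T‖ * ‖x n‖ := T.le_opNorm _
    _ ≤ c := by rw [← hc]; nlinarith [hx1 n]
  have hlim : Tendsto (fun n => ‖T (x n)‖) atTop (𝓝 c) := by
    have hlow : Tendsto (fun n : ℕ => c - 1 / (n + 1)) atTop (𝓝 c) := by
      simpa using (tendsto_const_nhds (x := c)).sub tendsto_one_div_add_atTop_nhds_zero_nat
    exact tendsto_of_tendsto_of_tendsto_of_le_of_le hlow tendsto_const_nhds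
      (fun n => (hx2 n).le) hTx_le
  set S : H →L[ℂ] H := ContinuousLinearMap.adjoint T ∘L T with hS
  have hadj : ‖ContinuousLinearMap.adjoint T‖ = c := by
    exact (ContinuousLinearMap.adjoint : (H →L[ℂ] H) ≃ₗᵢ⋆[ℂ] (H →L[ℂ] H)).norm_map T
  have hScompact : IsCompactOperator S := by
    have := hT.continuous_comp (ContinuousLinearMap.adjoint T).continuous
    rwa [hS, show ⇑(ContinuousLinearMap.adjoint T ∘L T)
      = ⇑(ContinuousLinearMap.adjoint T) ∘ ⇑T from rfl]
  have hSle : ∀ n, ‖S (x n)‖ ≤ c ^ 2 := by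
    intro n
    calc ‖S (x n)‖ = ‖ContinuousLinearMap.adjoint T (T (x n))‖ := rfl
    _ ≤ ‖ContinuousLinearMap.adjoint T‖ * ‖T (x n)‖ := le_opNorm _ _
    _ ≤ c ^ 2 := by rw [hadj]; nlinarith [hTx_le n, norm_nonneg (T (x n))]
  have hre : ∀ n, RCLike.re (inner (𝕜 := ℂ) (S (x n)) (x n)) = ‖T (x n)‖ ^ 2 := by
    intro n
    have h1 : (inner (𝕜 := ℂ) (S (x n)) (x n)) = inner (𝕜 := ℂ) (T (x n)) (T (x n)) := by
      rw [hS]; exact ContinuousLinearMap.adjoint_inner_left T (x n) (T (x n))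
    rw [h1, inner_self_eq_norm_sq]
  have hvsq : ∀ n, ‖S (x n) - ((c : ℂ) ^ 2) • x n‖ ^ 2 ≤ 2 * c ^ 4 - 2 * c ^ 2 * ‖T (x n)‖ ^ 2 := by
    intro n
    have expand := norm_sub_sq (𝕜 := ℂ) (S (x n)) (((c : ℂ) ^ 2) • x n)
    have h1 : (inner (𝕜 := ℂ) (S (x n)) (((c : ℂ) ^ 2) • x n))
        = ((c : ℂ) ^ 2) * inner (𝕜 := ℂ) (S (x n)) (x n) := inner_smul_right _ _ _
    have h2 : RCLike.re (((c : ℂ) ^ 2) * inner (𝕜 := ℂ) (S (x n)) (x n))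
        = c ^ 2 * ‖T (x n)‖ ^ 2 := by
      rw [show ((c : ℂ) ^ 2) = ((c ^ 2 : ℝ) : ℂ) by push_cast; ring,
        show RCLike.re ((((c ^ 2 : ℝ)) : ℂ) * inner (𝕜 := ℂ) (S (x n)) (x n))
          = c ^ 2 * RCLike.re (inner (𝕜 := ℂ) (S (x n)) (x n)) from RCLike.re_ofReal_mul _ _,
        hre n]
    have h3 : ‖((c : ℂ) ^ 2) • x n‖ = c ^ 2 * ‖x n‖ := by
      rw [norm_smul]; simp [abs_of_nonneg (sq_nonneg c)]
    have h6 : ‖S (x n)‖ ^ 2 ≤ c ^ 4 := by nlinarith [hSle n, norm_nonneg (S (x n))]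
    have ht : ‖x n‖ ^ 2 ≤ 1 := by nlinarith [norm_nonneg (x n), hx1 n]
    have h7 : (c ^ 2 * ‖x n‖) ^ 2 ≤ c ^ 4 := by
      calc (c ^ 2 * ‖x n‖) ^ 2 = c ^ 4 * ‖x n‖ ^ 2 := by ring
      _ ≤ c ^ 4 * 1 := by
        apply mul_le_mul_of_nonneg_left ht (by positivity)
      _ = c ^ 4 := mul_one _
    rw [expand, h1, h2, h3]
    linarith
  have hv0 : Tendsto (fun n => S (x n) - ((c : ℂ) ^ 2) • x n) atTop (𝓝 0) := by
    rw [tendsto_zero_iff_norm_tendsto_zero]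
    have hsq : Tendsto (fun n => ‖S (x n) - ((c : ℂ) ^ 2) • x n‖ ^ 2) atTop (𝓝 0) := by
      have hub : Tendsto (fun n => 2 * c ^ 4 - 2 * c ^ 2 * ‖T (x n)‖ ^ 2) atTop (𝓝 0) := by
        have := ((hlim.pow 2).const_mul (2 * c ^ 2)).const_sub (2 * c ^ 4)
        convert this using 2
        ring
      exact tendsto_of_tendsto_of_tendsto_of_le_of_le tendsto_const_nhds hub
        (fun n => sq_nonneg _) hvsq
    have h8 := (Real.continuous_sqrt.tendsto 0).comp hsq
    rw [Real.sqrt_zero] at h8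
    exact h8.congr (fun n => Real.sqrt_sq (norm_nonneg _))
  obtain ⟨K, hK, hKsub⟩ := hScompact.image_closedBall_subset_compact 1
  have hmemK : ∀ n, S (x n) ∈ K := fun n =>
    hKsub ⟨x n, mem_closedBall_zero_iff.mpr (hx1 n), rfl⟩
  obtain ⟨y, -, φ, hφ, hconv⟩ := hK.tendsto_subseq hmemK
  have hc2 : ((c : ℂ) ^ 2) ≠ 0 := pow_ne_zero 2 (by exact_mod_cast hn)
  have hxconv : Tendsto (fun n => x (φ n)) atTop (𝓝 (((c : ℂ) ^ 2)⁻¹ • y)) := by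
    have h1 : Tendsto (fun n => S (x (φ n)) - (S (x (φ n)) - ((c : ℂ) ^ 2) • x (φ n)))
        atTop (𝓝 (y - 0)) := hconv.sub (hv0.comp hφ.tendsto_atTop)
    have h2 : Tendsto (fun n => ((c : ℂ) ^ 2) • x (φ n)) atTop (𝓝 y) := by
      rw [show y = y - 0 by rw [sub_zero]]
      exact h1.congr (fun n => by abel)
    have h3 := h2.const_smul (((c : ℂ) ^ 2)⁻¹)
    exact h3.congr (fun n => by rw [smul_smul, inv_mul_cancel₀ hc2, one_smul])
  refine ⟨((c : ℂ) ^ 2)⁻¹ • y, ?_, ?_⟩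
  · exact le_of_tendsto hxconv.norm (Eventually.of_forall fun n => hx1 _)
  · have h4 : Tendsto (fun n => ‖T (x (φ n))‖) atTop (𝓝 ‖T (((c : ℂ) ^ 2)⁻¹ • y)‖) :=
      ((T.continuous.tendsto _).comp hxconv).norm
    have h5 : Tendsto (fun n => ‖T (x (φ n))‖) atTop (𝓝 c) := hlim.comp hφ.tendsto_atTop
    exact tendsto_nhds_unique h4 h5

open ContinuousLinearMap in
lemma step (A B : H →L[ℂ] H) (hA : IsCompactOperator A) (hB : IsCompactOperator B)
    (hnA : ‖A‖ = 1) (hnB : ‖B‖ = 1) (ω : ℂ) (hω : ‖ω‖ = 1)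
    (hsum : ‖A + ω • B‖ = 2) :
    ∃ x : H, x ≠ 0 ∧ (ContinuousLinearMap.adjoint A ∘L A) x = x ∧
      (ContinuousLinearMap.adjoint B ∘L A) x = ω • x := by
  have hTc : IsCompactOperator ⇑(A + ω • B) := by
    have := hA.add (hB.smul ω)
    rwa [show ⇑A + ω • ⇑B = ⇑(A + ω • B) by ext z; simp] at this
  obtain ⟨x, hx1, hxT⟩ := attains_norm (A + ω • B) hTc (by rw [hsum]; norm_num)
  rw [hsum] at hxT
  have happ : (A + ω • B) x = A x + ω • B x := by simp
  have hAx_le : ‖A x‖ ≤ 1 := by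
    calc ‖A x‖ ≤ ‖A‖ * ‖x‖ := A.le_opNorm x
    _ ≤ 1 := by rw [hnA]; simpa using hx1
  have hBx_le : ‖B x‖ ≤ 1 := by
    calc ‖B x‖ ≤ ‖B‖ * ‖x‖ := B.le_opNorm x
    _ ≤ 1 := by rw [hnB]; simpa using hx1
  have hsmul : ‖ω • B x‖ = ‖B x‖ := by rw [norm_smul, hω, one_mul]
  have htri : (2:ℝ) ≤ ‖A x‖ + ‖ω • B x‖ := by
    rw [← hxT, happ]; exact norm_add_le _ _
  have hAx : ‖A x‖ = 1 := by rw [hsmul] at htri; linarith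
  have hBx : ‖B x‖ = 1 := by rw [hsmul] at htri; linarith
  have hpar := parallelogram_law_with_norm ℂ (A x) (ω • B x)
  have hsum2 : ‖A x + ω • B x‖ = 2 := by rw [← happ, hxT]
  have heq : A x = ω • B x := by
    have h0 : ‖A x - ω • B x‖ * ‖A x - ω • B x‖ = 0 := by
      rw [hsum2, hAx, hsmul, hBx] at hpar; linarith
    exact sub_eq_zero.mp (norm_eq_zero.mp (mul_self_eq_zero.mp h0))
  have fix : ∀ C : H →L[ℂ] H, ‖C‖ = 1 → ‖C x‖ = 1 →
      ContinuousLinearMap.adjoint C (C x) = x := by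
    intro C hC hCx
    have hadj : ‖ContinuousLinearMap.adjoint C‖ = 1 := by
      rw [← hC]
      exact (ContinuousLinearMap.adjoint : (H →L[ℂ] H) ≃ₗᵢ⋆[ℂ] (H →L[ℂ] H)).norm_map C
    have h1 : ‖ContinuousLinearMap.adjoint C (C x)‖ ≤ 1 := by
      calc ‖ContinuousLinearMap.adjoint C (C x)‖ ≤ ‖ContinuousLinearMap.adjoint C‖ * ‖C x‖ :=
        le_opNorm _ _
      _ = 1 := by rw [hadj, hCx, one_mul]
    have h2 : RCLike.re (inner (𝕜 := ℂ) (ContinuousLinearMap.adjoint C (C x)) x) = 1 := by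
      rw [ContinuousLinearMap.adjoint_inner_left, inner_self_eq_norm_sq, hCx]; norm_num
    have h3 := norm_sub_sq (𝕜 := ℂ) (ContinuousLinearMap.adjoint C (C x)) x
    rw [h2] at h3
    have h4 : ‖ContinuousLinearMap.adjoint C (C x) - x‖ ^ 2 ≤ 0 := by
      rw [h3]
      nlinarith [norm_nonneg (ContinuousLinearMap.adjoint C (C x)), hx1, h1,
        norm_nonneg x]
    have h5 : ‖ContinuousLinearMap.adjoint C (C x) - x‖ = 0 := by
      nlinarith [norm_nonneg (ContinuousLinearMap.adjoint C (C x) - x)]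
    rw [← sub_eq_zero]
    exact norm_eq_zero.mp h5
  refine ⟨x, ?_, ?_, ?_⟩
  · intro h
    rw [h] at hAx
    simp at hAx
  · exact fix A hnA hAx
  · have : ContinuousLinearMap.adjoint B (A x) = ω • x := by
      rw [heq, map_smul, fix B hnB hBx]
    simpa using this

/-- For `m ≥ 2`, there is no linear isometry from the complex `ℓ₁^m` into the space of
compact operators on `ℓ₂`. -/
theorem stmt_6 (m : ℕ) (hm : 2 ≤ m) :
    ¬ ∃ Φ : PiLp 1 (fun _ : Fin m => ℂ) →ₗ[ℂ] (H →L[ℂ] H),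
      (∀ v, IsCompactOperator (Φ v)) ∧ ∀ v, ‖Φ v‖ = ‖v‖ := by
  rintro ⟨Φ, hcomp, hiso⟩
  obtain ⟨k, rfl⟩ : ∃ k, m = k + 2 := ⟨m - 2, by omega⟩
  set A : H →L[ℂ] H := Φ (uvec k 1 0) with hAdef
  set B : H →L[ℂ] H := Φ (uvec k 0 1) with hBdef
  have hA1 : ‖A‖ = 1 := by rw [hAdef, hiso, uvec_norm]; norm_num
  have hB1 : ‖B‖ = 1 := by rw [hBdef, hiso, uvec_norm]; norm_num
  have hv : ∀ n : ℕ, Φ (uvec k 1 (om n)) = A + om n • B := by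
    intro n
    rw [uvec_decomp, map_add, map_smul, map_smul, one_smul]
  have hsum : ∀ n : ℕ, ‖A + om n • B‖ = 2 := by
    intro n
    rw [← hv n, hiso, uvec_norm, om_norm n]
    norm_num
  choose x hx0 hxA hxB using fun n =>
    step A B (hcomp _) (hcomp _) hA1 hB1 (om n) (om_norm n) (hsum n)
  set S : H →L[ℂ] H := ContinuousLinearMap.adjoint A ∘L A with hSdef
  set E : Submodule ℂ H := LinearMap.ker ((S - 1 : H →L[ℂ] H) : H →ₗ[ℂ] H) with hEdef
  have hmemE : ∀ n, x n ∈ E := by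
    intro n
    rw [hEdef, LinearMap.mem_ker]
    show (S - 1) (x n) = 0
    rw [ContinuousLinearMap.sub_apply, ContinuousLinearMap.one_apply, hxA n, sub_self]
  have hSc : IsCompactOperator ⇑S := by
    have h := (hcomp (uvec k 1 0)).continuous_comp (ContinuousLinearMap.adjoint A).continuous
    rwa [hSdef, show ⇑(ContinuousLinearMap.adjoint A ∘L A)
      = ⇑(ContinuousLinearMap.adjoint A) ∘ ⇑A from rfl]
  obtain ⟨K, hK, hKsub⟩ := hSc.image_closedBall_subset_compact 1
  have hEclosed : IsClosed (E : Set H) := ContinuousLinearMap.isClosed_ker (S - 1)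
  have hXcompact : IsCompact ((E : Set H) ∩ Metric.closedBall 0 1) := by
    apply hK.of_isClosed_subset (hEclosed.inter Metric.isClosed_closedBall)
    rintro z ⟨hzE, hzB⟩
    have hz : S z = z := by
      have h : (S - 1) z = 0 := LinearMap.mem_ker.mp hzE
      have h2 : S z - z = 0 := by
        simpa [ContinuousLinearMap.sub_apply] using h
      exact sub_eq_zero.mp h2
    have hmem : S z ∈ K := hKsub ⟨z, hzB, rfl⟩
    rwa [hz] at hmem
  haveI hEfd : FiniteDimensional ℂ ↥E := by
    apply FiniteDimensional.of_isCompact_closedBall₀ (𝕜 := ℂ) (rpos := one_pos)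
    rw [Topology.IsEmbedding.subtypeVal.isCompact_iff]
    have himg : (Subtype.val '' Metric.closedBall (0 : ↥E) 1)
        = (E : Set H) ∩ Metric.closedBall 0 1 := by
      ext z
      constructor
      · rintro ⟨w, hw, rfl⟩
        exact ⟨w.2, by simpa [Metric.mem_closedBall, dist_zero_right] using hw⟩
      · rintro ⟨hzE, hzB⟩
        exact ⟨⟨z, hzE⟩, by simpa [Metric.mem_closedBall, dist_zero_right] using hzB, rfl⟩
    rw [himg]
    exact hXcompact
  set f : Module.End ℂ H := ((ContinuousLinearMap.adjoint B ∘L A : H →L[ℂ] H) : H →ₗ[ℂ] H)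
    with hfdef
  have heig : ∀ n, f.HasEigenvector (om n) (x n) := fun n =>
    ⟨Module.End.mem_eigenspace_iff.mpr (hxB n), hx0 n⟩
  have li := Module.End.eigenvectors_linearIndependent' f om om_inj x heig
  have liE : LinearIndependent ℂ (fun n => (⟨x n, hmemE n⟩ : ↥E)) := by
    apply LinearIndependent.of_comp E.subtype
    exact li
  exact Module.Finite.not_linearIndependent_of_infinite _ liE
end
end

section
/- Let 2 < p < ∞ and suppose Φ: ℓ_p² → B(ℓ₂) defined by Φ(z₁,z₂) = z₁T + z₂S is a linear isometry. Then neither T nor S is a compact operator. -/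
noncomputable section

open ContinuousLinearMap ComplexConjugate Filter Topology
open scoped InnerProductSpace

namespace Stmt7Aux

set_option linter.unusedSectionVars false
set_option maxHeartbeats 1000000

variable {E : Type*} [NormedAddCommGroup E] [InnerProductSpace ℂ E] [CompleteSpace E]

lemma attain {T : E →L[ℂ] E} (hT : ‖T‖ ≤ 1) {x : E} (hx : ‖T x‖ = ‖x‖) :
    ContinuousLinearMap.adjoint T (T x) = x := by
  have h1 : ‖ContinuousLinearMap.adjoint T (T x)‖ ≤ ‖x‖ := by
    calc ‖ContinuousLinearMap.adjoint T (T x)‖ ≤ ‖ContinuousLinearMap.adjoint T‖ * ‖T x‖ :=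
          (ContinuousLinearMap.adjoint T).le_opNorm _
    _ ≤ 1 * ‖x‖ := by
        rw [hx]
        apply mul_le_mul_of_nonneg_right _ (norm_nonneg _)
        rw [LinearIsometryEquiv.norm_map]; exact hT
    _ = ‖x‖ := one_mul _
  have h2 : RCLike.re ⟪ContinuousLinearMap.adjoint T (T x), x⟫_ℂ = ‖x‖ ^ 2 := by
    rw [adjoint_inner_left, inner_self_eq_norm_sq, hx]
  have h3 : ‖ContinuousLinearMap.adjoint T (T x) - x‖ ^ 2 ≤ 0 := by
    rw [@norm_sub_sq ℂ, h2]
    nlinarith [norm_nonneg (ContinuousLinearMap.adjoint T (T x)), norm_nonneg x]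
  have h4 : ‖ContinuousLinearMap.adjoint T (T x) - x‖ = 0 := by
    nlinarith [norm_nonneg (ContinuousLinearMap.adjoint T (T x) - x)]
  rwa [norm_eq_zero, sub_eq_zero] at h4

section Iso

variable {p : ℝ} {T S : E →L[ℂ] E}
  (hp : 2 < p)
  (hiso : ∀ z₁ z₂ : ℂ,
      ‖z₁ • T + z₂ • S‖ = (‖z₁‖ ^ p + ‖z₂‖ ^ p) ^ (1 / p))

include hp hiso

lemma normT_one : ‖T‖ = 1 := by
  have hp0 : (0 : ℝ) < p := by linarith
  have h := hiso 1 0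
  rwa [one_smul, zero_smul, add_zero, norm_one, norm_zero, Real.one_rpow,
    Real.zero_rpow hp0.ne', add_zero, Real.one_rpow] at h

lemma normTS (z : ℂ) : ‖T + z • S‖ = (1 + ‖z‖ ^ p) ^ (1 / p) := by
  have h := hiso 1 z
  rwa [one_smul, norm_one, Real.one_rpow] at h

lemma kills {f : E} (hf : ‖T f‖ = ‖f‖) : S f = 0 := by
  have hp0 : (0 : ℝ) < p := by linarith
  have key : ∀ t : ℝ, 0 < t → ‖S f‖ ^ 2 ≤ t ^ (p - 2) * ‖f‖ ^ 2 := by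
    intro t ht
    set c : ℝ := RCLike.re ⟪T f, S f⟫_ℂ with hc
    set s : ℝ := if 0 ≤ c then t else -t with hs
    have hsabs : ‖((s : ℝ) : ℂ)‖ = t := by
      rw [Complex.norm_real, Real.norm_eq_abs]
      rcases le_or_gt 0 c with h | h
      · rw [hs, if_pos h, abs_of_pos ht]
      · rw [hs, if_neg (not_le.mpr h), abs_neg, abs_of_pos ht]
    have hsc : 0 ≤ s * c := by
      rcases le_or_gt 0 c with h | h
      · rw [hs, if_pos h]; positivity
      · rw [hs, if_neg (not_le.mpr h)]; nlinarith
    have hs2 : s ^ 2 = t ^ 2 := by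
      rcases le_or_gt 0 c with h | h
      · rw [hs, if_pos h]
      · rw [hs, if_neg (not_le.mpr h)]; ring
    -- lower bound for the norm of (T + s•S) f
    have e1 : ‖f‖ ^ 2 + t ^ 2 * ‖S f‖ ^ 2 ≤ ‖(T + ((s : ℝ) : ℂ) • S) f‖ ^ 2 := by
      rw [ContinuousLinearMap.add_apply, ContinuousLinearMap.smul_apply, @norm_add_sq ℂ]
      have hre : RCLike.re ⟪T f, ((s : ℝ) : ℂ) • S f⟫_ℂ = s * c := by
        rw [inner_smul_right]
        simp [hc, Complex.mul_re, RCLike.re_to_complex]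
      have hns : ‖((s : ℝ) : ℂ) • S f‖ ^ 2 = t ^ 2 * ‖S f‖ ^ 2 := by
        rw [norm_smul, mul_pow]
        congr 1
        rw [hsabs]
      rw [hre, hns, hf]
      nlinarith
    -- upper bound
    have e2 : ‖(T + ((s : ℝ) : ℂ) • S) f‖ ^ 2 ≤ (1 + t ^ p) * ‖f‖ ^ 2 := by
      have h1 : ‖(T + ((s : ℝ) : ℂ) • S) f‖ ≤ (1 + t ^ p) ^ (1 / p) * ‖f‖ := by
        have := (T + ((s : ℝ) : ℂ) • S).le_opNorm f
        rwa [normTS hp hiso, hsabs] at this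
      have h2 : ‖(T + ((s : ℝ) : ℂ) • S) f‖ ^ 2 ≤ ((1 + t ^ p) ^ (1 / p)) ^ 2 * ‖f‖ ^ 2 := by
        rw [← mul_pow]
        exact pow_le_pow_left₀ (norm_nonneg _) h1 2
      refine h2.trans ?_
      apply mul_le_mul_of_nonneg_right _ (by positivity)
      have hbase : (0 : ℝ) ≤ 1 + t ^ p := by positivity
      have : ((1 + t ^ p) ^ (1 / p)) ^ 2 = (1 + t ^ p) ^ (2 / p) := by
        rw [← Real.rpow_natCast ((1 + t ^ p) ^ (1 / p)) 2, ← Real.rpow_mul hbase]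
        congr 1
        ring
      rw [this]
      calc (1 + t ^ p) ^ (2 / p) ≤ (1 + t ^ p) ^ (1 : ℝ) := by
            apply Real.rpow_le_rpow_of_exponent_le
            · nlinarith [Real.rpow_nonneg (le_of_lt ht) p]
            · rw [div_le_one hp0]; linarith
      _ = 1 + t ^ p := Real.rpow_one _
    -- combine
    have e3 : t ^ 2 * ‖S f‖ ^ 2 ≤ t ^ p * ‖f‖ ^ 2 := by nlinarith
    have htp : t ^ p = t ^ (p - 2) * t ^ 2 := by
      rw [← Real.rpow_natCast t 2, ← Real.rpow_add ht]
      norm_num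
    rw [htp] at e3
    have ht2 : (0 : ℝ) < t ^ 2 := by positivity
    calc ‖S f‖ ^ 2 = t ^ 2 * ‖S f‖ ^ 2 / t ^ 2 := by field_simp
    _ ≤ t ^ (p - 2) * t ^ 2 * ‖f‖ ^ 2 / t ^ 2 := by
        gcongr
        
    _ = t ^ (p - 2) * ‖f‖ ^ 2 := by field_simp
  -- conclude S f = 0
  by_contra hSf
  have hSf2 : 0 < ‖S f‖ ^ 2 := by
    have : S f ≠ 0 := hSf
    have : 0 < ‖S f‖ := norm_pos_iff.mpr this
    positivity
  have hfpos : 0 < ‖f‖ ^ 2 := by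
    rcases eq_or_ne f 0 with h | h
    · exfalso; apply hSf; rw [h, map_zero]
    · have : 0 < ‖f‖ := norm_pos_iff.mpr h
      positivity
  set d : ℝ := ‖S f‖ ^ 2 / (2 * ‖f‖ ^ 2) with hd
  have hdpos : 0 < d := by positivity
  have hp2 : (0 : ℝ) < p - 2 := by linarith
  set t : ℝ := d ^ (1 / (p - 2)) with htdef
  have htpos : 0 < t := Real.rpow_pos_of_pos hdpos _
  have htp2 : t ^ (p - 2) = d := by
    rw [htdef, ← Real.rpow_mul hdpos.le, one_div, inv_mul_cancel₀ hp2.ne', Real.rpow_one]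
  have := key t htpos
  rw [htp2, hd] at this
  have : ‖S f‖ ^ 2 ≤ ‖S f‖ ^ 2 / 2 := by
    calc ‖S f‖ ^ 2 ≤ ‖S f‖ ^ 2 / (2 * ‖f‖ ^ 2) * ‖f‖ ^ 2 := this
    _ = ‖S f‖ ^ 2 / 2 := by rw [div_mul_eq_mul_div, mul_div_mul_right _ _ hfpos.ne']
  linarith

lemma hisoAdj : ∀ z₁ z₂ : ℂ,
    ‖z₁ • ContinuousLinearMap.adjoint T + z₂ • ContinuousLinearMap.adjoint S‖ =
      (‖z₁‖ ^ p + ‖z₂‖ ^ p) ^ (1 / p) := by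
  intro z₁ z₂
  have h : z₁ • ContinuousLinearMap.adjoint T + z₂ • ContinuousLinearMap.adjoint S =
      ContinuousLinearMap.adjoint (conj z₁ • T + conj z₂ • S) := by
    rw [map_add, LinearIsometryEquiv.map_smulₛₗ, LinearIsometryEquiv.map_smulₛₗ]
    simp
  rw [h, LinearIsometryEquiv.norm_map, hiso, Complex.norm_conj, Complex.norm_conj]

lemma main : ¬ IsCompactOperator T := by
  intro hT
  have hp0 : (0 : ℝ) < p := by linarith
  have hT1 : ‖T‖ = 1 := normT_one hp hiso
  have hiso' : ∀ z₁ z₂ : ℂ,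
      ‖z₁ • S + z₂ • T‖ = (‖z₁‖ ^ p + ‖z₂‖ ^ p) ^ (1 / p) := by
    intro z₁ z₂
    rw [add_comm, hiso z₂ z₁, add_comm (‖z₂‖ ^ p)]
  have hS1 : ‖S‖ = 1 := normT_one hp hiso'
  -- the norm-attaining subspace F
  set F : Submodule ℂ E :=
    LinearMap.ker (((ContinuousLinearMap.adjoint T).comp T - ContinuousLinearMap.id ℂ E : E →L[ℂ] E) : E →ₗ[ℂ] E) with hF
  have hFmem : ∀ x : E, x ∈ F ↔ ContinuousLinearMap.adjoint T (T x) = x := by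
    intro x
    rw [hF, LinearMap.mem_ker]
    constructor
    · intro h
      have : ((ContinuousLinearMap.adjoint T).comp T - ContinuousLinearMap.id ℂ E) x = 0 := h
      rw [ContinuousLinearMap.sub_apply, ContinuousLinearMap.comp_apply,
        ContinuousLinearMap.id_apply, sub_eq_zero] at this
      exact this
    · intro h
      show ((ContinuousLinearMap.adjoint T).comp T - ContinuousLinearMap.id ℂ E) x = 0
      rw [ContinuousLinearMap.sub_apply, ContinuousLinearMap.comp_apply,
        ContinuousLinearMap.id_apply, sub_eq_zero]
      exact h
  have hclosed : IsClosed (F : Set E) :=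
    ContinuousLinearMap.isClosed_ker _
  haveI : CompleteSpace F := hclosed.completeSpace_coe
  -- on F, T preserves norms
  have hTF : ∀ f ∈ F, ‖T f‖ = ‖f‖ := by
    intro f hf
    have h := (hFmem f).mp hf
    have h2 : ‖T f‖ ^ 2 = ‖f‖ ^ 2 := by
      rw [← inner_self_eq_norm_sq (𝕜 := ℂ) (T f), ← adjoint_inner_left, h,
        inner_self_eq_norm_sq]
    apply le_antisymm <;>
      nlinarith [norm_nonneg (T f), norm_nonneg f, sq_nonneg (‖T f‖ - ‖f‖),
        sq_nonneg (‖T f‖ + ‖f‖)]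
  have hSF : ∀ f ∈ F, S f = 0 := fun f hf => kills hp hiso (hTF f hf)
  have hSA : ∀ y : E, ‖ContinuousLinearMap.adjoint T y‖ = ‖y‖ →
      ContinuousLinearMap.adjoint S y = 0 :=
    fun y hy => kills hp (hisoAdj hp hiso) hy
  -- the restriction of T to Fᗮ
  set A : (Fᗮ : Submodule ℂ E) →L[ℂ] E := T.comp (Fᗮ.subtypeL) with hA
  set μ : ℝ := ‖A‖ with hμ
  have hμ0 : 0 ≤ μ := by rw [hμ]; exact norm_nonneg A
  have hAr : ∀ r : Fᗮ, A r = T (r : E) := fun r => rfl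
  have hμ1 : μ ≤ 1 := by
    apply ContinuousLinearMap.opNorm_le_bound _ zero_le_one
    intro r
    rw [hAr, one_mul]
    calc ‖T (r : E)‖ ≤ ‖T‖ * ‖(r : E)‖ := T.le_opNorm _
    _ = ‖r‖ := by rw [hT1, one_mul]; rfl
  have hμlt : μ < 1 := by
    by_contra hcon
    have hμeq : μ = 1 := le_antisymm hμ1 (not_lt.mp hcon)
    -- a sequence of near-norming vectors in Fᗮ
    have hseq : ∀ n : ℕ, ∃ x : (Fᗮ : Submodule ℂ E), ‖x‖ < 1 ∧
        1 - 1 / (n + 1) < ‖A x‖ := by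
      intro n
      apply A.exists_lt_apply_of_lt_opNorm
      rw [← hμ, hμeq]
      have : (0 : ℝ) < 1 / (n + 1) := by positivity
      linarith
    choose x hx1 hx2 using hseq
    -- compactness of T
    obtain ⟨K, hK, hKmem⟩ := hT
    obtain ⟨ε, hε, hball⟩ := Metric.mem_nhds_iff.mp hKmem
    have hmemK : ∀ n, T (((ε / 2 : ℝ) : ℂ) • (x n : E)) ∈ K := by
      intro n
      apply hball
      rw [Metric.mem_ball, dist_zero_right, norm_smul]
      have h1 : ‖((ε / 2 : ℝ) : ℂ)‖ = ε / 2 := by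
        rw [Complex.norm_real, Real.norm_eq_abs, abs_of_pos (by linarith)]
      rw [h1]
      have : ‖(x n : E)‖ < 1 := hx1 n
      nlinarith
    obtain ⟨g, hgK, φ, hφmono, hφtend⟩ := hK.tendsto_subseq hmemK
    -- the limit y of T (x (φ n))
    set y : E := ((2 / ε : ℝ) : ℂ) • g with hy
    have hTx_tend : Tendsto (fun n => T (x (φ n) : E)) atTop (𝓝 y) := by
      have h := hφtend.const_smul (((2 / ε : ℝ) : ℂ))
      have heq : ∀ n, ((2 / ε : ℝ) : ℂ) • T (((ε / 2 : ℝ) : ℂ) • (x (φ n) : E))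
          = T (x (φ n) : E) := by
        intro n
        rw [map_smul, smul_smul, ← Complex.ofReal_mul]
        have : (2 / ε) * (ε / 2) = 1 := by field_simp
        rw [this, Complex.ofReal_one, one_smul]
      exact h.congr heq
    have hnormA : Tendsto (fun n => ‖A (x n)‖) atTop (𝓝 1) := by
      have hupper : ∀ n, ‖A (x n)‖ ≤ 1 := by
        intro n
        calc ‖A (x n)‖ ≤ ‖A‖ * ‖x n‖ := A.le_opNorm _
        _ ≤ 1 * 1 := by
            apply mul_le_mul (by rw [← hμ, hμeq]) (hx1 n).le (norm_nonneg _) zero_le_one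
        _ = 1 := one_mul _
      have hlow : Tendsto (fun n : ℕ => 1 - 1 / ((n : ℝ) + 1)) atTop (𝓝 1) := by
        have := tendsto_one_div_add_atTop_nhds_zero_nat (𝕜 := ℝ)
        have h2 := (tendsto_const_nhds (x := (1:ℝ)) (f := atTop)).sub this
        simpa using h2
      apply tendsto_of_tendsto_of_tendsto_of_le_of_le hlow tendsto_const_nhds
      · intro n; exact (hx2 n).le
      · intro n; exact hupper n
    have hφat : Tendsto φ atTop atTop := hφmono.tendsto_atTop
    have hy1 : ‖y‖ = 1 := by
      have h1 : Tendsto (fun n => ‖T (x (φ n) : E)‖) atTop (𝓝 ‖y‖) :=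
        hTx_tend.norm
      have h2 : Tendsto (fun n => ‖A (x (φ n))‖) atTop (𝓝 1) := hnormA.comp hφat
      exact tendsto_nhds_unique h1 h2
    set u : E := ContinuousLinearMap.adjoint T y with hu
    have hinner : Tendsto (fun n => ⟪u, (x (φ n) : E)⟫_ℂ) atTop (𝓝 (1 : ℂ)) := by
      have h1 : Tendsto (fun n => ⟪y, T (x (φ n) : E)⟫_ℂ) atTop (𝓝 (⟪y, y⟫_ℂ)) :=
        tendsto_const_nhds.inner hTx_tend
      have h2 : ⟪y, y⟫_ℂ = 1 := by
        rw [inner_self_eq_norm_sq_to_K, hy1]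
        norm_num
      rw [h2] at h1
      convert h1 using 2 with n
      rw [hu, adjoint_inner_left]
    have hu_ge : 1 ≤ ‖u‖ := by
      have h1 : Tendsto (fun n => ‖⟪u, (x (φ n) : E)⟫_ℂ‖) atTop (𝓝 1) := by
        have := hinner.norm
        simpa using this
      apply le_of_tendsto h1
      filter_upwards with n
      calc ‖⟪u, (x (φ n) : E)⟫_ℂ‖ ≤ ‖u‖ * ‖(x (φ n) : E)‖ := norm_inner_le_norm _ _
      _ ≤ ‖u‖ * 1 := by
          apply mul_le_mul_of_nonneg_left _ (norm_nonneg _)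
          exact (hx1 (φ n)).le
      _ = ‖u‖ := mul_one _
    have hu_le : ‖u‖ ≤ 1 := by
      calc ‖u‖ ≤ ‖ContinuousLinearMap.adjoint T‖ * ‖y‖ :=
            (ContinuousLinearMap.adjoint T).le_opNorm _
      _ = 1 := by rw [LinearIsometryEquiv.norm_map, hT1, hy1, one_mul]
    have hu_eq : ‖u‖ = 1 := le_antisymm hu_le hu_ge
    have hTu : ‖T u‖ = ‖u‖ := by
      have hle : ‖T u‖ ≤ 1 := by
        calc ‖T u‖ ≤ ‖T‖ * ‖u‖ := T.le_opNorm _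
        _ = 1 := by rw [hT1, hu_eq, one_mul]
      have hge : 1 ≤ ‖T u‖ := by
        have h1 : ⟪y, T u⟫_ℂ = ⟪u, u⟫_ℂ := by rw [hu, adjoint_inner_left]
        have h2 : ⟪u, u⟫_ℂ = 1 := by
          rw [inner_self_eq_norm_sq_to_K, hu_eq]; norm_num
        have h3 : ‖⟪y, T u⟫_ℂ‖ = 1 := by rw [h1, h2, norm_one]
        have h4 : ‖⟪y, T u⟫_ℂ‖ ≤ ‖y‖ * ‖T u‖ := norm_inner_le_norm _ _
        rw [h3, hy1, one_mul] at h4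
        exact h4
      rw [hu_eq]
      exact le_antisymm hle hge
    have huF : u ∈ F := (hFmem u).mpr (attain hT1.le hTu)
    have hzero : ∀ n, ⟪u, (x n : E)⟫_ℂ = 0 := by
      intro n
      exact (Submodule.mem_orthogonal F ((x n : E))).mp (x n).2 u huF
    have : (1 : ℂ) = 0 := by
      apply tendsto_nhds_unique hinner
      simp only [hzero]
      exact tendsto_const_nhds
    exact one_ne_zero this
  -- conclusion: for t = (1-μ)/2, ‖T + t S‖ ≤ 1, contradicting the isometry
  set t : ℝ := (1 - μ) / 2 with htdef
  have htpos : 0 < t := by rw [htdef]; linarith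
  have hμt : μ + t < 1 := by rw [htdef]; linarith
  have hbound : ∀ v : E, ‖(T + ((t : ℝ) : ℂ) • S) v‖ ≤ 1 * ‖v‖ := by
    intro v
    set f : E := (Submodule.orthogonalProjection F v : E) with hfdef
    set r : E := v - f with hrdef
    have hfF : f ∈ F := (Submodule.orthogonalProjection F v).2
    have hrF : r ∈ Fᗮ := Submodule.sub_starProjection_mem_orthogonal (K := F) v
    have hv : v = f + r := by rw [hrdef]; abel
    have hfr : ⟪f, r⟫_ℂ = 0 := (Submodule.mem_orthogonal F r).mp hrF f hfF
    have hv2 : ‖v‖ ^ 2 = ‖f‖ ^ 2 + ‖r‖ ^ 2 := by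
      rw [hv, pow_two, pow_two, pow_two]
      exact norm_add_sq_eq_norm_sq_add_norm_sq_of_inner_eq_zero f r hfr
    have happ : (T + ((t : ℝ) : ℂ) • S) v = T f + (T r + ((t : ℝ) : ℂ) • S r) := by
      rw [hv]
      rw [ContinuousLinearMap.add_apply, ContinuousLinearMap.smul_apply,
        map_add, map_add, hSF f hfF, smul_add, smul_zero]
      abel
    have horth : ⟪T f, T r + ((t : ℝ) : ℂ) • S r⟫_ℂ = 0 := by
      rw [inner_add_right, inner_smul_right]
      have h1 : ⟪T f, T r⟫_ℂ = 0 := by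
        rw [← adjoint_inner_left, (hFmem f).mp hfF]
        exact hfr
      have h2 : ⟪T f, S r⟫_ℂ = 0 := by
        have hTfA : ContinuousLinearMap.adjoint S (T f) = 0 := by
          apply hSA
          rw [(hFmem f).mp hfF, hTF f hfF]
        rw [← adjoint_inner_left, hTfA, inner_zero_left]
      rw [h1, h2, mul_zero, add_zero]
    have hTr : ‖T r‖ ≤ μ * ‖r‖ := by
      have h := A.le_opNorm ⟨r, hrF⟩
      have e1 : A ⟨r, hrF⟩ = T r := rfl
      have e2 : ‖(⟨r, hrF⟩ : (Fᗮ : Submodule ℂ E))‖ = ‖r‖ := rfl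
      rw [e1, e2, ← hμ] at h
      exact h
    have hSr : ‖S r‖ ≤ ‖r‖ := by
      have := S.le_opNorm r
      rwa [hS1, one_mul] at this
    have hsum : ‖T r + ((t : ℝ) : ℂ) • S r‖ ≤ (μ + t) * ‖r‖ := by
      calc ‖T r + ((t : ℝ) : ℂ) • S r‖ ≤ ‖T r‖ + ‖((t : ℝ) : ℂ) • S r‖ := norm_add_le _ _
      _ = ‖T r‖ + t * ‖S r‖ := by
          rw [norm_smul, Complex.norm_real, Real.norm_eq_abs, abs_of_pos htpos]
      _ ≤ μ * ‖r‖ + t * ‖r‖ := by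
          apply add_le_add hTr
          exact mul_le_mul_of_nonneg_left hSr htpos.le
      _ = (μ + t) * ‖r‖ := by ring
    have hpyth : ‖T f + (T r + ((t : ℝ) : ℂ) • S r)‖ ^ 2
        = ‖T f‖ ^ 2 + ‖T r + ((t : ℝ) : ℂ) • S r‖ ^ 2 := by
      rw [pow_two, pow_two, pow_two]
      exact norm_add_sq_eq_norm_sq_add_norm_sq_of_inner_eq_zero _ _ horth
    have hsq : ‖(T + ((t : ℝ) : ℂ) • S) v‖ ^ 2 ≤ ‖v‖ ^ 2 := by
      rw [happ, hpyth, hTF f hfF, hv2]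
      have h1 : ‖T r + ((t : ℝ) : ℂ) • S r‖ ^ 2 ≤ ((μ + t) * ‖r‖) ^ 2 :=
        pow_le_pow_left₀ (norm_nonneg _) hsum 2
      have hle1 : (μ + t) ^ 2 ≤ 1 := by nlinarith
      have h2 : ((μ + t) * ‖r‖) ^ 2 ≤ ‖r‖ ^ 2 := by
        rw [mul_pow]
        exact mul_le_of_le_one_left (sq_nonneg _) hle1
      linarith
    rw [one_mul]
    nlinarith [norm_nonneg ((T + ((t : ℝ) : ℂ) • S) v), norm_nonneg v]
  have hle : ‖T + ((t : ℝ) : ℂ) • S‖ ≤ 1 :=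
    ContinuousLinearMap.opNorm_le_bound _ zero_le_one hbound
  have heq : ‖T + ((t : ℝ) : ℂ) • S‖ = (1 + t ^ p) ^ (1 / p) := by
    have := normTS hp hiso ((t : ℝ) : ℂ)
    rwa [Complex.norm_real, Real.norm_eq_abs, abs_of_pos htpos] at this
  have hgt : 1 < (1 + t ^ p) ^ (1 / p) := by
    rw [Real.one_lt_rpow_iff_of_pos (by positivity)]
    left
    constructor
    · nlinarith [Real.rpow_pos_of_pos htpos p]
    · positivity
  rw [heq] at hle
  linarith

end Iso

end Stmt7Aux

/-- Let `2 < p < ∞`. If `Φ(z₁,z₂) = z₁T + z₂S` is a linear isometry from `ℓ_p²` into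
`B(ℓ₂)`, then neither `T` nor `S` is compact. -/
theorem stmt_7 (p : ℝ) (hp : 2 < p) (T S : H →L[ℂ] H)
    (hiso : ∀ z₁ z₂ : ℂ,
      ‖z₁ • T + z₂ • S‖ = (‖z₁‖ ^ p + ‖z₂‖ ^ p) ^ (1 / p)) :
    ¬ IsCompactOperator T ∧ ¬ IsCompactOperator S := by
  have hiso' : ∀ z₁ z₂ : ℂ,
      ‖z₁ • S + z₂ • T‖ = (‖z₁‖ ^ p + ‖z₂‖ ^ p) ^ (1 / p) := by
    intro z₁ z₂
    rw [add_comm, hiso z₂ z₁, add_comm (‖z₂‖ ^ p)]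
  exact ⟨Stmt7Aux.main hp hiso, Stmt7Aux.main hp hiso'⟩
end
end

section
/- There do not exist 2×2 complex matrices T, S with ‖z₁T + z₂S‖_p = |z₁| + |z₂| for all z₁, z₂ ∈ ℂ, where ‖·‖_p denotes the Schatten p-norm with 1 < p < ∞; that is, ℓ₁² does not embed isometrically into S_p². -/
open scoped NNReal

noncomputable section

/-- The singular values of a complex `m × m` matrix: square roots of the eigenvalues of
`Aᴴ * A`. -/
noncomputable def singVals {m : ℕ} (A : Matrix (Fin m) (Fin m) ℂ) : Fin m → ℝ :=
  fun i => Real.sqrt ((Matrix.isHermitian_conjTranspose_mul_self A).eigenvalues i)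

/-- The Schatten `p`-norm of a complex `m × m` matrix: `(∑ sᵢ(A)^p)^(1/p)` where `sᵢ(A)`
are the singular values, i.e. `(Tr |A|^p)^(1/p)`. -/
noncomputable def schattenNormMat (p : ℝ) {m : ℕ} (A : Matrix (Fin m) (Fin m) ℂ) : ℝ :=
  (∑ i, singVals A i ^ p) ^ (1 / p)

lemma aux_sup {x y r : ℝ} (hx : 0 ≤ x) (hy : 0 ≤ y) (hr : 1 ≤ r) :
    x ^ r + y ^ r ≤ (x + y) ^ r := by
  lift x to ℝ≥0 using hx
  lift y to ℝ≥0 using hy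
  exact_mod_cast NNReal.add_rpow_le_rpow_add x y hr

lemma aux_sub_nn (x y : ℝ≥0) {r : ℝ} (hr0 : 0 < r) (hr1 : r ≤ 1) :
    x ^ r + y ^ r ≤ 2 ^ (1 - r) * (x + y) ^ r := by
  have hp : 1 ≤ 1 / r := one_le_one_div hr0 hr1
  have h := NNReal.rpow_add_le_mul_rpow_add_rpow (x ^ r) (y ^ r) hp
  rw [← NNReal.rpow_mul x, ← NNReal.rpow_mul y, mul_one_div, div_self hr0.ne',
    NNReal.rpow_one, NNReal.rpow_one] at h
  have h2 := NNReal.rpow_le_rpow h hr0.le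
  rwa [← NNReal.rpow_mul, one_div_mul_cancel hr0.ne', NNReal.rpow_one,
    NNReal.mul_rpow, ← NNReal.rpow_mul, sub_mul, one_div_mul_cancel hr0.ne',
    one_mul] at h2

lemma aux_sub {x y r : ℝ} (hx : 0 ≤ x) (hy : 0 ≤ y) (hr0 : 0 < r) (hr1 : r ≤ 1) :
    x ^ r + y ^ r ≤ 2 ^ (1 - r) * (x + y) ^ r := by
  lift x to ℝ≥0 using hx
  lift y to ℝ≥0 using hy
  exact_mod_cast aux_sub_nn x y hr0 hr1

lemma cmp1 {r : ℝ} (hr : 1 ≤ r) (f : Fin 2 → ℝ) (hf : ∀ i, 0 ≤ f i) :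
    ∑ i, f i ^ r ≤ (∑ i, f i) ^ r := by
  rw [Fin.sum_univ_two, Fin.sum_univ_two]
  exact aux_sup (hf 0) (hf 1) hr

lemma cmp2 {r : ℝ} (hr0 : 0 < r) (hr1 : r ≤ 1) (f : Fin 2 → ℝ) (hf : ∀ i, 0 ≤ f i) :
    ∑ i, f i ^ r ≤ 2 ^ (1 - r) * (∑ i, f i) ^ r := by
  rw [Fin.sum_univ_two, Fin.sum_univ_two]
  exact aux_sub (hf 0) (hf 1) hr0 hr1

lemma trace_eq_sum_eig {m : ℕ} (A : Matrix (Fin m) (Fin m) ℂ)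
    (hA : A.IsHermitian) : A.trace = ∑ i, (hA.eigenvalues i : ℂ) := by
  conv_lhs => rw [hA.spectral_theorem]
  rw [Unitary.conjStarAlgAut_apply]
  rw [Matrix.trace_mul_cycle]
  rw [show star (hA.eigenvectorUnitary : Matrix (Fin m) (Fin m) ℂ) *
      (hA.eigenvectorUnitary : Matrix (Fin m) (Fin m) ℂ) = 1 from
    Matrix.UnitaryGroup.star_mul_self _, one_mul, Matrix.trace_diagonal]
  rfl

lemma singVals_nonneg {m : ℕ} (A : Matrix (Fin m) (Fin m) ℂ) (i : Fin m) :
    0 ≤ singVals A i := Real.sqrt_nonneg _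

lemma frob {m : ℕ} (A : Matrix (Fin m) (Fin m) ℂ) :
    ∑ i, singVals A i ^ (2 : ℝ) = ∑ i, ∑ j, Complex.normSq (A i j) := by
  have h1 : ∀ i, singVals A i ^ (2 : ℝ) =
      (Matrix.isHermitian_conjTranspose_mul_self A).eigenvalues i := by
    intro i
    rw [singVals, show (2:ℝ) = ((2:ℕ):ℝ) by norm_num, Real.rpow_natCast, sq,
      Real.mul_self_sqrt (Matrix.eigenvalues_conjTranspose_mul_self_nonneg A i)]
  simp_rw [h1]
  have h2 := trace_eq_sum_eig _ (Matrix.isHermitian_conjTranspose_mul_self A)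
  have h3 : (A.conjTranspose * A).trace = ∑ i, ∑ j, (Complex.normSq (A j i) : ℂ) := by
    simp [Matrix.trace, Matrix.diag, Matrix.mul_apply, Matrix.conjTranspose_apply,
      Complex.normSq_eq_conj_mul_self]
  rw [h3] at h2
  have := congrArg Complex.re h2.symm
  simp only [Complex.re_sum, Complex.ofReal_re] at this
  rw [this]
  exact Finset.sum_comm

lemma parallelogram {m : ℕ} (T S : Matrix (Fin m) (Fin m) ℂ) :
    ∑ i, singVals (T + S) i ^ (2:ℝ) + ∑ i, singVals (T - S) i ^ (2:ℝ)
      = 2 * ∑ i, singVals T i ^ (2:ℝ) + 2 * ∑ i, singVals S i ^ (2:ℝ) := by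
  rw [frob, frob, frob, frob]
  rw [Finset.mul_sum, Finset.mul_sum, ← Finset.sum_add_distrib, ← Finset.sum_add_distrib]
  refine Finset.sum_congr rfl fun i _ => ?_
  rw [Finset.mul_sum, Finset.mul_sum, ← Finset.sum_add_distrib, ← Finset.sum_add_distrib]
  refine Finset.sum_congr rfl fun j _ => ?_
  simp only [Matrix.add_apply, Matrix.sub_apply]
  rw [Complex.normSq_add, Complex.normSq_sub]
  ring

/-- For `1 < p < ∞`, there are no `2 × 2` complex matrices `T, S` with
`‖z₁T + z₂S‖_p = |z₁| + |z₂|` for all `z₁, z₂ ∈ ℂ`; i.e. `ℓ₁²` does not embed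
isometrically into `S_p²`. -/
theorem stmt_10 (p : ℝ) (hp1 : 1 < p) :
    ¬ ∃ T S : Matrix (Fin 2) (Fin 2) ℂ,
      ∀ z₁ z₂ : ℂ, schattenNormMat p (z₁ • T + z₂ • S) = ‖z₁‖ + ‖z₂‖ := by
  rintro ⟨T, S, h⟩
  have hp0 : 0 < p := by linarith
  have hNpnn : ∀ A : Matrix (Fin 2) (Fin 2) ℂ, 0 ≤ ∑ i, singVals A i ^ p := fun A =>
    Finset.sum_nonneg fun i _ => Real.rpow_nonneg (singVals_nonneg A i) p
  have hN2nn : ∀ A : Matrix (Fin 2) (Fin 2) ℂ, 0 ≤ ∑ i, singVals A i ^ (2:ℝ) := fun A =>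
    Finset.sum_nonneg fun i _ => Real.rpow_nonneg (singVals_nonneg A i) 2
  have key : ∀ (A : Matrix (Fin 2) (Fin 2) ℂ) (c : ℝ), schattenNormMat p A = c →
      ∑ i, singVals A i ^ p = c ^ p := by
    intro A c hA
    have : ((∑ i, singVals A i ^ p) ^ (1/p)) ^ p = c ^ p := by rw [← hA]; rfl
    rwa [← Real.rpow_mul (hNpnn A), one_div_mul_cancel hp0.ne', Real.rpow_one] at this
  have hT : ∑ i, singVals T i ^ p = 1 := by
    have h1 : schattenNormMat p T = 1 := by simpa using h 1 0
    have := key T 1 h1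
    rwa [Real.one_rpow] at this
  have hS : ∑ i, singVals S i ^ p = 1 := by
    have h1 : schattenNormMat p S = 1 := by simpa using h 0 1
    have := key S 1 h1
    rwa [Real.one_rpow] at this
  have hTS : ∑ i, singVals (T + S) i ^ p = 2 ^ p := by
    apply key
    have := h 1 1
    rw [show (1:ℂ) • T + (1:ℂ) • S = T + S by module] at this
    rw [this]; norm_num
  have hTS' : ∑ i, singVals (T - S) i ^ p = 2 ^ p := by
    apply key
    have := h 1 (-1)
    rw [show (1:ℂ) • T + (-1:ℂ) • S = T - S by module] at this
    rw [this]; norm_num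
  have hpar := parallelogram T S
  have h22 : (2:ℝ) ^ (2:ℝ) = 4 := by
    rw [show (2:ℝ) = ((2:ℕ):ℝ) by norm_num, Real.rpow_natCast]; norm_num
  rcases le_total p 2 with hp2 | hp2
  · -- 1 < p ≤ 2
    have hr1 : (1:ℝ) ≤ 2/p := (one_le_div hp0).2 hp2
    have ha : ∀ A : Matrix (Fin 2) (Fin 2) ℂ,
        (∑ i, singVals A i ^ (2:ℝ)) ≤ (∑ i, singVals A i ^ p) ^ (2/p) := by
      intro A
      have h0 := cmp1 hr1 (fun i => singVals A i ^ p)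
        (fun i => Real.rpow_nonneg (singVals_nonneg A i) p)
      refine le_trans (le_of_eq (Finset.sum_congr rfl fun i _ => ?_)) h0
      rw [← Real.rpow_mul (singVals_nonneg A i), show p * (2/p) = 2 by field_simp]
    have hT2 : ∑ i, singVals T i ^ (2:ℝ) ≤ 1 := by
      have := ha T; rwa [hT, Real.one_rpow] at this
    have hS2 : ∑ i, singVals S i ^ (2:ℝ) ≤ 1 := by
      have := ha S; rwa [hS, Real.one_rpow] at this
    have hlow : ∀ A : Matrix (Fin 2) (Fin 2) ℂ, (∑ i, singVals A i ^ p) = 2 ^ p →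
        (2:ℝ) ^ (3 - 2/p) ≤ ∑ i, singVals A i ^ (2:ℝ) := by
      intro A hA
      have hb : ∑ i, singVals A i ^ p
          ≤ 2 ^ (1 - p/2) * (∑ i, singVals A i ^ (2:ℝ)) ^ (p/2) := by
        have h0 := cmp2 (r := p/2) (by positivity) (by linarith)
          (fun i => singVals A i ^ (2:ℝ))
          (fun i => Real.rpow_nonneg (singVals_nonneg A i) 2)
        refine le_trans (le_of_eq (Finset.sum_congr rfl fun i _ => ?_)) h0
        rw [← Real.rpow_mul (singVals_nonneg A i), show (2:ℝ) * (p/2) = p by ring]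
      rw [hA] at hb
      have h1 : (2:ℝ) ^ (p + p/2 - 1) ≤ (∑ i, singVals A i ^ (2:ℝ)) ^ (p/2) := by
        have h2 : (2:ℝ) ^ (p/2 - 1) * (2:ℝ) ^ p
            ≤ (2:ℝ) ^ (p/2 - 1) * (2 ^ (1 - p/2) * (∑ i, singVals A i ^ (2:ℝ)) ^ (p/2)) :=
          mul_le_mul_of_nonneg_left hb (by positivity)
        rw [← mul_assoc, ← Real.rpow_add (by norm_num), ← Real.rpow_add (by norm_num)] at h2
        rw [show p/2 - 1 + (1 - p/2) = 0 by ring, Real.rpow_zero, one_mul] at h2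
        rw [show p + p/2 - 1 = p/2 - 1 + p by ring]
        exact h2
      have h3 := Real.rpow_le_rpow (by positivity) h1 (by positivity : (0:ℝ) ≤ 2/p)
      rwa [← Real.rpow_mul (by norm_num : (0:ℝ) ≤ 2), ← Real.rpow_mul (hN2nn A),
        show (p/2) * (2/p) = 1 by field_simp, Real.rpow_one,
        show (p + p/2 - 1) * (2/p) = 3 - 2/p by field_simp; ring] at h3
    have e1 := hlow _ hTS
    have e2 := hlow _ hTS'
    have egt : (2:ℝ) < 2 ^ (3 - 2/p) := by
      nth_rewrite 1 [show (2:ℝ) = 2 ^ (1:ℝ) by rw [Real.rpow_one]]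
      apply Real.rpow_lt_rpow_of_exponent_lt one_lt_two
      have : 2/p < 2 := by rw [div_lt_iff₀ hp0]; linarith
      linarith
    linarith
  · -- 2 ≤ p
    have hr1 : (1:ℝ) ≤ p/2 := by linarith
    have hr2 : (0:ℝ) < 2/p := by positivity
    have hr3 : (2:ℝ)/p ≤ 1 := by rw [div_le_one hp0]; linarith
    -- N2 A ≤ 2^(1-2/p) * (Np A)^(2/p)
    have hb : ∀ A : Matrix (Fin 2) (Fin 2) ℂ,
        (∑ i, singVals A i ^ (2:ℝ)) ≤ 2 ^ (1 - 2/p) * (∑ i, singVals A i ^ p) ^ (2/p) := by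
      intro A
      have h0 := cmp2 (r := 2/p) hr2 hr3 (fun i => singVals A i ^ p)
        (fun i => Real.rpow_nonneg (singVals_nonneg A i) p)
      refine le_trans (le_of_eq (Finset.sum_congr rfl fun i _ => ?_)) h0
      rw [← Real.rpow_mul (singVals_nonneg A i), show p * (2/p) = 2 by field_simp]
    have hT2 : ∑ i, singVals T i ^ (2:ℝ) < 2 := by
      have := hb T
      rw [hT, Real.one_rpow, mul_one] at this
      refine lt_of_le_of_lt this ?_
      have h5 : (2:ℝ) ^ (1 - 2/p) < 2 ^ (1:ℝ) :=
        Real.rpow_lt_rpow_of_exponent_lt one_lt_two (by linarith)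
      rwa [Real.rpow_one] at h5
    have hS2 : ∑ i, singVals S i ^ (2:ℝ) < 2 := by
      have := hb S
      rw [hS, Real.one_rpow, mul_one] at this
      refine lt_of_le_of_lt this ?_
      have h5 : (2:ℝ) ^ (1 - 2/p) < 2 ^ (1:ℝ) :=
        Real.rpow_lt_rpow_of_exponent_lt one_lt_two (by linarith)
      rwa [Real.rpow_one] at h5
    -- Np A ≤ (N2 A)^(p/2), hence 4 ≤ N2 A when Np A = 2^p
    have hlow : ∀ A : Matrix (Fin 2) (Fin 2) ℂ, (∑ i, singVals A i ^ p) = 2 ^ p →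
        (4:ℝ) ≤ ∑ i, singVals A i ^ (2:ℝ) := by
      intro A hA
      have hb2 : ∑ i, singVals A i ^ p ≤ (∑ i, singVals A i ^ (2:ℝ)) ^ (p/2) := by
        have h0 := cmp1 (r := p/2) hr1 (fun i => singVals A i ^ (2:ℝ))
          (fun i => Real.rpow_nonneg (singVals_nonneg A i) 2)
        refine le_trans (le_of_eq (Finset.sum_congr rfl fun i _ => ?_)) h0
        rw [← Real.rpow_mul (singVals_nonneg A i), show (2:ℝ) * (p/2) = p by ring]
      rw [hA] at hb2
      have h3 := Real.rpow_le_rpow (by positivity) hb2 hr2.le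
      rwa [← Real.rpow_mul (by norm_num : (0:ℝ) ≤ 2), ← Real.rpow_mul (hN2nn A),
        show (p/2) * (2/p) = 1 by field_simp, Real.rpow_one,
        show p * (2/p) = 2 by field_simp, h22] at h3
    have e1 := hlow _ hTS
    have e2 := hlow _ hTS'
    linarith
end
end

section
/- Let T₁, S₁ be bounded operators on ℓ₂ whose matrices (with respect to the standard basis) have block form T₁ = [[1, 0],[0, T₂]] and S₁ = [[1, 0],[0, S₂]] (first row and column equal to e₁ direction with entry 1 and zeros elsewhere). If ‖z₁T₁ + z₂S₁‖ = |z₁| + |z₂| for all z₁, z₂ ∈ ℂ, then ‖z₁T₂ + z₂S₂‖ = |z₁| + |z₂| for all z₁, z₂ ∈ ℂ. -/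
noncomputable section

open Complex ComplexConjugate ContinuousLinearMap

/-- `ℂ ⊕₂ ℓ₂`, the Hilbert space decomposition `ℓ₂ = ℂe₁ ⊕ e₁^⊥`. -/
abbrev H1 : Type := WithLp 2 (ℂ × H)

lemma strict_tri (x y : ℂ) (h : (x * conj y).im ≠ 0) :
    ‖x + y‖ < ‖x‖ + ‖y‖ := by
  have h1 : (x * conj y).re < ‖x‖ * ‖y‖ := by
    calc (x * conj y).re ≤ |(x * conj y).re| := le_abs_self _
    _ < ‖x * conj y‖ := Complex.abs_re_lt_norm.2 h
    _ = ‖x‖ * ‖y‖ := by rw [norm_mul, Complex.norm_conj]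
  have hns := Complex.normSq_add x y
  apply lt_of_pow_lt_pow_left₀ 2 (by positivity)
  nlinarith [Complex.sq_norm (x+y), Complex.sq_norm x, Complex.sq_norm y,
    norm_nonneg x, norm_nonneg y]

lemma norm_pair (a : ℂ) (ζ : H) :
    ‖(WithLp.equiv 2 (ℂ × H)).symm (a, ζ)‖ = Real.sqrt (‖a‖ ^ 2 + ‖ζ‖ ^ 2) := by
  rw [WithLp.prod_norm_eq_of_L2]
  norm_num

lemma block_apply (T₁ S₁ : H1 →L[ℂ] H1) (T₂ S₂ : H →L[ℂ] H)
    (hT : ∀ (a : ℂ) (ζ : H), T₁ ((WithLp.equiv 2 (ℂ × H)).symm (a, ζ)) =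
      (WithLp.equiv 2 (ℂ × H)).symm (a, T₂ ζ))
    (hS : ∀ (a : ℂ) (ζ : H), S₁ ((WithLp.equiv 2 (ℂ × H)).symm (a, ζ)) =
      (WithLp.equiv 2 (ℂ × H)).symm (a, S₂ ζ))
    (w₁ w₂ a : ℂ) (ζ : H) :
    (w₁ • T₁ + w₂ • S₁) ((WithLp.equiv 2 (ℂ × H)).symm (a, ζ)) =
      (WithLp.equiv 2 (ℂ × H)).symm ((w₁ + w₂) * a, (w₁ • T₂ + w₂ • S₂) ζ) := by
  rw [ContinuousLinearMap.add_apply, ContinuousLinearMap.smul_apply,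
    ContinuousLinearMap.smul_apply, hT, hS, WithLp.equiv_symm_apply, ← WithLp.toLp_smul, ← WithLp.toLp_smul,
    ← WithLp.toLp_add]
  congr 1
  ext
  · simp [add_mul]
  · simp
section ops
variable (T₁ S₁ : H1 →L[ℂ] H1) (T₂ S₂ : H →L[ℂ] H)
variable (hT : ∀ (a : ℂ) (ζ : H), T₁ ((WithLp.equiv 2 (ℂ × H)).symm (a, ζ)) =
      (WithLp.equiv 2 (ℂ × H)).symm (a, T₂ ζ))
variable (hS : ∀ (a : ℂ) (ζ : H), S₁ ((WithLp.equiv 2 (ℂ × H)).symm (a, ζ)) =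
      (WithLp.equiv 2 (ℂ × H)).symm (a, S₂ ζ))

include hT hS

lemma small_le_big (w₁ w₂ : ℂ) : ‖w₁ • T₂ + w₂ • S₂‖ ≤ ‖w₁ • T₁ + w₂ • S₁‖ := by
  apply ContinuousLinearMap.opNorm_le_bound _ (norm_nonneg _)
  intro ζ
  have h0 : ‖(w₁ • T₂ + w₂ • S₂) ζ‖
      = ‖(w₁ • T₁ + w₂ • S₁) ((WithLp.equiv 2 (ℂ × H)).symm (0, ζ))‖ := by
    rw [block_apply T₁ S₁ T₂ S₂ hT hS, norm_pair]
    simp [Real.sqrt_sq]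
  rw [h0]
  calc ‖(w₁ • T₁ + w₂ • S₁) ((WithLp.equiv 2 (ℂ × H)).symm (0, ζ))‖
      ≤ ‖w₁ • T₁ + w₂ • S₁‖ * ‖(WithLp.equiv 2 (ℂ × H)).symm ((0 : ℂ), ζ)‖ :=
        ContinuousLinearMap.le_opNorm _ _
    _ = ‖w₁ • T₁ + w₂ • S₁‖ * ‖ζ‖ := by rw [norm_pair]; simp [Real.sqrt_sq]

lemma big_le_max (w₁ w₂ : ℂ) :
    ‖w₁ • T₁ + w₂ • S₁‖ ≤ max (‖w₁ + w₂‖) ‖w₁ • T₂ + w₂ • S₂‖ := by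
  set M := max (‖w₁ + w₂‖) ‖w₁ • T₂ + w₂ • S₂‖ with hM
  have hM0 : 0 ≤ M := le_trans (norm_nonneg _) (le_max_right _ _)
  apply ContinuousLinearMap.opNorm_le_bound _ hM0
  intro x
  have hx : x = (WithLp.equiv 2 (ℂ × H)).symm (x.fst, x.snd) := rfl
  rw [hx, block_apply T₁ S₁ T₂ S₂ hT hS, norm_pair, norm_pair]
  have h1 : ‖(w₁ + w₂) * x.fst‖ ^ 2 ≤ M ^ 2 * ‖x.fst‖ ^ 2 := by
    rw [norm_mul, mul_pow]
    have h := le_max_left (‖w₁ + w₂‖) ‖w₁ • T₂ + w₂ • S₂‖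
    rw [← hM] at h
    have h2 := pow_le_pow_left₀ (norm_nonneg (w₁ + w₂)) h 2
    exact mul_le_mul_of_nonneg_right h2 (by positivity)
  have h2 : ‖(w₁ • T₂ + w₂ • S₂) x.snd‖ ^ 2 ≤ M ^ 2 * ‖x.snd‖ ^ 2 := by
    have hb := ContinuousLinearMap.le_opNorm (w₁ • T₂ + w₂ • S₂) x.snd
    have h := le_max_right (‖w₁ + w₂‖) ‖w₁ • T₂ + w₂ • S₂‖
    rw [← hM] at h
    have h3 : ‖(w₁ • T₂ + w₂ • S₂) x.snd‖ ≤ M * ‖x.snd‖ :=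
      hb.trans (mul_le_mul_of_nonneg_right h (norm_nonneg _))
    calc ‖(w₁ • T₂ + w₂ • S₂) x.snd‖ ^ 2 ≤ (M * ‖x.snd‖) ^ 2 :=
          pow_le_pow_left₀ (norm_nonneg _) h3 2
      _ = M ^ 2 * ‖x.snd‖ ^ 2 := by ring
  calc Real.sqrt (‖(w₁ + w₂) * x.fst‖ ^ 2 + ‖(w₁ • T₂ + w₂ • S₂) x.snd‖ ^ 2)
      ≤ Real.sqrt (M ^ 2 * (‖x.fst‖ ^ 2 + ‖x.snd‖ ^ 2)) := by
        apply Real.sqrt_le_sqrt; nlinarith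
    _ = M * Real.sqrt (‖x.fst‖ ^ 2 + ‖x.snd‖ ^ 2) := by
        rw [Real.sqrt_mul (by positivity), Real.sqrt_sq hM0]

end ops
/-- If `T₁ = [[1,0],[0,T₂]]` and `S₁ = [[1,0],[0,S₂]]` in block form with respect to
`ℓ₂ = ℂe₁ ⊕ e₁^⊥`, and `‖z₁T₁ + z₂S₁‖ = |z₁| + |z₂|` for all `z₁, z₂ ∈ ℂ`, then
`‖z₁T₂ + z₂S₂‖ = |z₁| + |z₂|` for all `z₁, z₂ ∈ ℂ`. -/
theorem stmt_13 (T₁ S₁ : H1 →L[ℂ] H1) (T₂ S₂ : H →L[ℂ] H)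
    (hT : ∀ (a : ℂ) (ζ : H), T₁ ((WithLp.equiv 2 (ℂ × H)).symm (a, ζ)) =
      (WithLp.equiv 2 (ℂ × H)).symm (a, T₂ ζ))
    (hS : ∀ (a : ℂ) (ζ : H), S₁ ((WithLp.equiv 2 (ℂ × H)).symm (a, ζ)) =
      (WithLp.equiv 2 (ℂ × H)).symm (a, S₂ ζ))
    (hiso : ∀ z₁ z₂ : ℂ, ‖z₁ • T₁ + z₂ • S₁‖ = ‖z₁‖ + ‖z₂‖) :
    ∀ z₁ z₂ : ℂ, ‖z₁ • T₂ + z₂ • S₂‖ = ‖z₁‖ + ‖z₂‖ := by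
  have keyA : ∀ w₁ w₂ : ℂ, ‖w₁ • T₂ + w₂ • S₂‖ ≤ ‖w₁‖ + ‖w₂‖ :=
    fun w₁ w₂ => (small_le_big T₁ S₁ T₂ S₂ hT hS w₁ w₂).trans (le_of_eq (hiso w₁ w₂))
  have keyB : ∀ w₁ w₂ : ℂ, (w₁ * conj w₂).im ≠ 0 →
      ‖w₁ • T₂ + w₂ • S₂‖ = ‖w₁‖ + ‖w₂‖ := by
    intro w₁ w₂ him
    have hstrict := strict_tri w₁ w₂ him
    have h1 := big_le_max T₁ S₁ T₂ S₂ hT hS w₁ w₂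
    rw [hiso] at h1
    rcases le_max_iff.1 h1 with h | h
    · linarith
    · exact le_antisymm (keyA w₁ w₂) h
  intro z₁ z₂
  rcases eq_or_ne z₁ 0 with h1 | h1
  · rcases eq_or_ne z₂ 0 with h2 | h2
    · subst h1; subst h2
      simp only [zero_smul, add_zero, norm_zero, map_zero]
    · -- z₁ = 0, z₂ ≠ 0 : perturb the first coordinate
      subst h1
      refine le_antisymm (keyA 0 z₂) (le_of_forall_pos_le_add ?_)
      intro ε hε
      have habs2 : 0 < ‖z₂‖ := norm_pos_iff.mpr h2
      set t : ℝ := ε / (‖z₂‖ * (‖T₂‖ + 1)) with ht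
      have htpos : 0 < t := div_pos hε (by positivity)
      set c : ℂ := Complex.I * z₂ with hc
      have him : (((t : ℂ) * c) * conj z₂).im ≠ 0 := by
        have he : ((t : ℂ) * c) * conj z₂ = (t : ℂ) * (Complex.I * (Complex.normSq z₂ : ℂ)) := by
          rw [show ((t : ℂ) * c) * conj z₂ = (t : ℂ) * (Complex.I * (z₂ * conj z₂)) by
            rw [hc]; ring, Complex.mul_conj]
        have h' : ((t : ℂ) * (Complex.I * (Complex.normSq z₂ : ℂ))).im
            = t * Complex.normSq z₂ := by simp [Complex.mul_im]
        rw [he, h']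
        exact (mul_pos htpos (Complex.normSq_pos.2 h2)).ne'
      have hk := keyB ((t : ℂ) * c) z₂ him
      have hck : ‖(t : ℂ) * c‖ = t * ‖z₂‖ := by
        rw [norm_mul, hc, norm_mul, Complex.norm_real, Real.norm_eq_abs, Complex.norm_I, abs_of_pos htpos]; ring
      have hsplit : ((t : ℂ) * c) • T₂ + z₂ • S₂ =
          ((0 : ℂ) • T₂ + z₂ • S₂) + ((t : ℂ) * c) • T₂ := by
        rw [zero_smul, zero_add]; exact add_comm _ _
      have hle : ‖((t : ℂ) * c) • T₂ + z₂ • S₂‖ ≤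
          ‖(0 : ℂ) • T₂ + z₂ • S₂‖ + t * ‖z₂‖ * ‖T₂‖ := by
        rw [hsplit]
        refine (norm_add_le _ _).trans ?_
        have h5 := norm_smul_le ((t : ℂ) * c) T₂
        rw [hck] at h5
        linarith
      have hεb : t * ‖z₂‖ * ‖T₂‖ ≤ ε := by
        rw [ht]
        rw [div_mul_eq_mul_div, div_mul_eq_mul_div, div_le_iff₀ (by positivity)]
        nlinarith [norm_nonneg T₂]
      rw [hk] at hle
      rw [hck] at hle
      simp only [norm_zero, zero_add]
      nlinarith
  · rcases eq_or_ne ((z₁ * conj z₂).im) 0 with hs | hs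
    · -- perturb the second coordinate
      refine le_antisymm (keyA z₁ z₂) (le_of_forall_pos_le_add ?_)
      intro ε hε
      have habs1 : 0 < ‖z₁‖ := norm_pos_iff.mpr h1
      set t : ℝ := ε / (‖z₁‖ * (‖S₂‖ + 1)) with ht
      have htpos : 0 < t := div_pos hε (by positivity)
      set c : ℂ := -Complex.I * z₁ with hc
      have him : (z₁ * conj (z₂ + (t : ℂ) * c)).im ≠ 0 := by
        have he : z₁ * conj (z₂ + (t : ℂ) * c) =
            z₁ * conj z₂ + (t : ℂ) * (Complex.I * (Complex.normSq z₁ : ℂ)) := by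
          rw [← Complex.mul_conj z₁, hc]
          simp only [map_add, map_mul, map_neg, Complex.conj_I, Complex.conj_ofReal]
          ring
        have h' : ((t : ℂ) * (Complex.I * (Complex.normSq z₁ : ℂ))).im
            = t * Complex.normSq z₁ := by simp [Complex.mul_im]
        rw [he, Complex.add_im, h', hs, zero_add]
        exact (mul_pos htpos (Complex.normSq_pos.2 h1)).ne'
      have hk := keyB z₁ (z₂ + (t : ℂ) * c) him
      have hck : ‖(t : ℂ) * c‖ = t * ‖z₁‖ := by
        rw [norm_mul, hc, norm_mul, Complex.norm_real, Real.norm_eq_abs, abs_of_pos htpos]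
        simp
      have hsplit : z₁ • T₂ + (z₂ + (t : ℂ) * c) • S₂ =
          (z₁ • T₂ + z₂ • S₂) + ((t : ℂ) * c) • S₂ := by
        rw [add_smul]; abel
      have hle : ‖z₁ • T₂ + (z₂ + (t : ℂ) * c) • S₂‖ ≤
          ‖z₁ • T₂ + z₂ • S₂‖ + t * ‖z₁‖ * ‖S₂‖ := by
        rw [hsplit]
        refine (norm_add_le _ _).trans ?_
        have h5 := norm_smul_le ((t : ℂ) * c) S₂
        rw [hck] at h5
        linarith
      have htri : ‖z₂‖ ≤ ‖z₂ + (t : ℂ) * c‖ + t * ‖z₁‖ := by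
        have h6 : ‖z₂‖
            ≤ ‖z₂ + (t : ℂ) * c‖ + ‖(t : ℂ) * c‖ := by
          calc ‖z₂‖ = ‖(z₂ + (t : ℂ) * c) + -((t : ℂ) * c)‖ := by
                rw [add_neg_cancel_right]
            _ ≤ ‖z₂ + (t : ℂ) * c‖ + ‖-((t : ℂ) * c)‖ :=
                norm_add_le _ _
            _ = ‖z₂ + (t : ℂ) * c‖ + ‖(t : ℂ) * c‖ := by rw [norm_neg]
        rw [hck] at h6
        exact h6
      have hεb : t * ‖z₁‖ * (‖S₂‖ + 1) ≤ ε := by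
        rw [ht, div_mul_eq_mul_div, div_mul_eq_mul_div, div_le_iff₀ (by positivity)]
        nlinarith [norm_nonneg S₂]
      rw [hk] at hle
      nlinarith [norm_nonneg S₂]
    · exact keyB z₁ z₂ hs
end
end

section
/- Let 2 < p < ∞ and c > 0. Then there do not exist operators T, S ∈ B(ℓ₂) and a unit vector ζ with ‖Tζ‖ = 1, ‖Sζ‖ = c, ⟨Tζ, Sζ⟩ = 0, and ‖z₁T + z₂S‖ = (|z₁|^p + |z₂|^p)^{1/p} for all z₁, z₂ ∈ ℂ. Equivalently: the inequality (t^p + 1)^{2/p} ≥ t² + c² for all t ≥ 0 is impossible when 2 < p < ∞ and c > 0. -/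
noncomputable section

local notation "⟪" x ", " y "⟫" => @inner ℂ _ _ x y

lemma key_ineq (p c : ℝ) (hp : 2 < p) (hc : 0 < c)
    (h : ∀ t : ℝ, 0 < t → Real.sqrt (t ^ (2:ℕ) + c ^ (2:ℕ)) ≤ (t ^ p + 1) ^ (1 / p)) :
    False := by
  set t : ℝ := max 1 ((2 / c ^ 2) ^ (1 / (p - 2)) : ℝ) with ht_def
  have ht1 : (1:ℝ) ≤ t := le_max_left _ _
  have ht0 : (0:ℝ) < t := lt_of_lt_of_le one_pos ht1
  have hp2 : (0:ℝ) < p - 2 := by linarith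
  have htc : 2 / c ^ 2 ≤ t ^ (p - 2) := by
    calc 2 / c ^ 2 = ((2 / c ^ 2) ^ (1 / (p-2))) ^ (p-2) := by
          rw [one_div, Real.rpow_inv_rpow (by positivity) hp2.ne']
      _ ≤ t ^ (p-2) := Real.rpow_le_rpow (by positivity) (le_max_right _ _) hp2.le
  have hct : 2 ≤ c ^ 2 * t ^ (p - 2) := by
    rw [div_le_iff₀ (by positivity)] at htc
    nlinarith [htc]
  set A : ℝ := t ^ (2:ℕ) + c ^ (2:ℕ) with hA_def
  have hA : 0 < A := by positivity
  have hB : (0:ℝ) < t ^ p + 1 := by positivity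
  have h1 : A ^ (p/2) ≤ t ^ p + 1 := by
    have := Real.rpow_le_rpow (Real.sqrt_nonneg _) (h t ht0) (by positivity : (0:ℝ) ≤ p)
    rwa [Real.sqrt_eq_rpow, ← hA_def, ← Real.rpow_mul hA.le, show (1:ℝ)/p = p⁻¹ by rw [one_div],
      Real.rpow_inv_rpow hB.le (by positivity), show 1/2*p = p/2 by ring] at this
  have h2 : t ^ p + c ^ 2 * t ^ (p-2) ≤ A ^ (p/2) := by
    have hAsplit : A ^ (p/2) = A ^ ((p-2)/2) * A := by
      rw [show p/2 = (p-2)/2 + 1 by ring, Real.rpow_add hA, Real.rpow_one]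
    have e1 : t ^ (p-2) ≤ A ^ ((p-2)/2) := by
      have : t ^ (p-2) = (t ^ (2:ℕ)) ^ ((p-2)/2) := by
        rw [← Real.rpow_natCast t 2, ← Real.rpow_mul ht0.le,
          show ((2:ℕ):ℝ) * ((p-2)/2) = p-2 by push_cast; ring]
      rw [this]
      exact Real.rpow_le_rpow (by positivity) (le_add_of_nonneg_right (by positivity))
        (by positivity)
    have e2 : t ^ (p-2) * t ^ (2:ℕ) = t ^ p := by
      rw [← Real.rpow_natCast t 2, ← Real.rpow_add ht0,
        show p - 2 + ((2:ℕ):ℝ) = p by push_cast; ring]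
    calc t ^ p + c ^ 2 * t ^ (p-2) = t ^ (p-2) * A := by
          rw [hA_def]; push_cast; nlinarith [e2]
      _ ≤ A ^ ((p-2)/2) * A := mul_le_mul_of_nonneg_right e1 hA.le
      _ = A ^ (p/2) := hAsplit.symm
  nlinarith [h1, h2, Real.rpow_nonneg (le_of_lt (by positivity : (0:ℝ) < t)) (p-2)]

/-- For `2 < p < ∞` and `c > 0`, there are no operators `T, S` on `ℓ₂` and a unit vector
`ζ` with `‖Tζ‖ = 1`, `‖Sζ‖ = c`, `⟨Tζ, Sζ⟩ = 0` and
`‖z₁T + z₂S‖ = (|z₁|^p + |z₂|^p)^(1/p)` for all `z₁, z₂ ∈ ℂ`. -/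
theorem stmt_16 (p : ℝ) (hp : 2 < p) (c : ℝ) (hc : 0 < c) :
    ¬ ∃ (T S : H →L[ℂ] H) (ζ : H), ‖ζ‖ = 1 ∧ ‖T ζ‖ = 1 ∧ ‖S ζ‖ = c ∧
      ⟪T ζ, S ζ⟫ = 0 ∧
      ∀ z₁ z₂ : ℂ,
        ‖z₁ • T + z₂ • S‖ = (‖z₁‖ ^ p + ‖z₂‖ ^ p) ^ (1 / p) := by
  rintro ⟨T, S, ζ, hζ, hT, hS, horth, hnorm⟩
  have key : ∀ t : ℝ, 0 < t → Real.sqrt (t ^ (2:ℕ) + c ^ (2:ℕ)) ≤ (t ^ p + 1) ^ (1 / p) := by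
    intro t ht
    have hop : ‖(t:ℂ) • T + (1:ℂ) • S‖ = (t ^ p + 1) ^ (1 / p) := by
      rw [hnorm t 1]
      simp [abs_of_pos ht]
    have happ : ((t:ℂ) • T + (1:ℂ) • S) ζ = (t:ℂ) • T ζ + S ζ := by
      rw [ContinuousLinearMap.add_apply, ContinuousLinearMap.smul_apply,
        ContinuousLinearMap.smul_apply, one_smul]
    have hineq : ‖(t:ℂ) • T ζ + S ζ‖ ≤ (t ^ p + 1) ^ (1 / p) := by
      calc ‖(t:ℂ) • T ζ + S ζ‖ = ‖((t:ℂ) • T + (1:ℂ) • S) ζ‖ := by rw [happ]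
        _ ≤ ‖(t:ℂ) • T + (1:ℂ) • S‖ * ‖ζ‖ := ContinuousLinearMap.le_opNorm _ _
        _ = (t ^ p + 1) ^ (1 / p) := by rw [hop, hζ, mul_one]
    have hpyth : ‖(t:ℂ) • T ζ + S ζ‖ ^ (2:ℕ) = t ^ (2:ℕ) + c ^ (2:ℕ) := by
      have horth' : ⟪(t:ℂ) • T ζ, S ζ⟫ = 0 := by
        rw [inner_smul_left, horth, mul_zero]
      have := norm_add_sq_eq_norm_sq_add_norm_sq_of_inner_eq_zero _ _ horth'
      rw [norm_smul, hT, hS] at this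
      have hn : ‖(t:ℂ)‖ = t := by simp [abs_of_pos ht]
      rw [hn] at this
      nlinarith [this]
    calc Real.sqrt (t ^ (2:ℕ) + c ^ (2:ℕ)) = ‖(t:ℂ) • T ζ + S ζ‖ := by
          rw [← hpyth, Real.sqrt_sq (norm_nonneg _)]
      _ ≤ (t ^ p + 1) ^ (1 / p) := hineq
  exact key_ineq p c hp hc key
end
end
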